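/- arXiv:0905.1887 — 10 statements merged into one kernel-verified Lean document; each statement's English description precedes it below -/
import Mathlib

section
/- Let V be a vector space, α : V → V a linear map, and B : V⊗V → V⊗V a linear map satisfying the Yang-Baxter equation (id⊗B)∘(B⊗id)∘(id⊗B) = (B⊗id)∘(id⊗B)∘(B⊗id) and commuting with α⊗α. Then the map B_α = (α⊗α)∘B satisfies the Hom-Yang-Baxter equation for (V,α): (α⊗B_α)∘(B_α⊗α)∘(α⊗B_α) = (B_α⊗α)∘(α⊗B_α)∘(B_α⊗α), and B_α commutes with α⊗α. -/
open TensorProduct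

/-- The operator `α ⊗ B` on `(V ⊗ V) ⊗ V`, obtained by conjugating
`TensorProduct.map α B : V ⊗ (V ⊗ V) → V ⊗ (V ⊗ V)` with the associator. -/
noncomputable def leftTwist {k V : Type*} [CommRing k] [AddCommGroup V] [Module k V]
    (α : V →ₗ[k] V) (B : V ⊗[k] V →ₗ[k] V ⊗[k] V) :
    (V ⊗[k] V) ⊗[k] V →ₗ[k] (V ⊗[k] V) ⊗[k] V :=
  (TensorProduct.assoc k V V V).symm.toLinearMap ∘ₗ
    TensorProduct.map α B ∘ₗ (TensorProduct.assoc k V V V).toLinearMap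

-- key lemma: assoc⁻¹ ∘ map f (map g h) ∘ assoc = map (map f g) h
lemma conj_map {k V : Type*} [CommRing k] [AddCommGroup V] [Module k V]
    (f g h : V →ₗ[k] V) :
    leftTwist f (TensorProduct.map g h) = TensorProduct.map (TensorProduct.map f g) h := by
  unfold leftTwist
  rw [← LinearMap.comp_assoc, ← TensorProduct.map_map_comp_assoc_symm_eq]
  rw [LinearMap.comp_assoc]
  ext x y z
  simp

lemma key1 {k V : Type*} [CommRing k] [AddCommGroup V] [Module k V]
    (α : V →ₗ[k] V) (B : V ⊗[k] V →ₗ[k] V ⊗[k] V) :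
    leftTwist α (TensorProduct.map α α ∘ₗ B)
      = TensorProduct.map (TensorProduct.map α α) α ∘ₗ leftTwist LinearMap.id B := by
  have : TensorProduct.map α (TensorProduct.map α α ∘ₗ B)
      = TensorProduct.map α (TensorProduct.map α α) ∘ₗ TensorProduct.map LinearMap.id B := by
    rw [← TensorProduct.map_comp]; simp
  unfold leftTwist
  rw [this]
  have h2 := conj_map (k := k) (V := V) α α α
  unfold leftTwist at h2
  calc (TensorProduct.assoc k V V V).symm.toLinearMap ∘ₗ
      (TensorProduct.map α (TensorProduct.map α α) ∘ₗ TensorProduct.map LinearMap.id B) ∘ₗ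
      (TensorProduct.assoc k V V V).toLinearMap
      = ((TensorProduct.assoc k V V V).symm.toLinearMap ∘ₗ
          TensorProduct.map α (TensorProduct.map α α) ∘ₗ (TensorProduct.assoc k V V V).toLinearMap) ∘ₗ
        ((TensorProduct.assoc k V V V).symm.toLinearMap ∘ₗ
          TensorProduct.map LinearMap.id B ∘ₗ (TensorProduct.assoc k V V V).toLinearMap) := by
        ext x
        try simp [LinearMap.comp_assoc]
    _ = _ := by rw [h2]

lemma key2 {k V : Type*} [CommRing k] [AddCommGroup V] [Module k V]
    (α : V →ₗ[k] V) (B : V ⊗[k] V →ₗ[k] V ⊗[k] V)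
    (hcomm : TensorProduct.map α α ∘ₗ B = B ∘ₗ TensorProduct.map α α) :
    leftTwist α (TensorProduct.map α α ∘ₗ B)
      = leftTwist LinearMap.id B ∘ₗ TensorProduct.map (TensorProduct.map α α) α := by
  have : TensorProduct.map α (TensorProduct.map α α ∘ₗ B)
      = TensorProduct.map LinearMap.id B ∘ₗ TensorProduct.map α (TensorProduct.map α α) := by
    rw [hcomm, ← TensorProduct.map_comp]; simp
  unfold leftTwist
  rw [this]
  have h2 := conj_map (k := k) (V := V) α α α
  unfold leftTwist at h2
  calc (TensorProduct.assoc k V V V).symm.toLinearMap ∘ₗ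
      (TensorProduct.map LinearMap.id B ∘ₗ TensorProduct.map α (TensorProduct.map α α)) ∘ₗ
      (TensorProduct.assoc k V V V).toLinearMap
      = ((TensorProduct.assoc k V V V).symm.toLinearMap ∘ₗ
          TensorProduct.map LinearMap.id B ∘ₗ (TensorProduct.assoc k V V V).toLinearMap) ∘ₗ
        ((TensorProduct.assoc k V V V).symm.toLinearMap ∘ₗ
          TensorProduct.map α (TensorProduct.map α α) ∘ₗ (TensorProduct.assoc k V V V).toLinearMap) := by
        ext x
        try simp [LinearMap.comp_assoc]
    _ = _ := by rw [h2]

theorem stmt0 {k V : Type*} [Field k] [AddCommGroup V] [Module k V]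
    (α : V →ₗ[k] V) (B : V ⊗[k] V →ₗ[k] V ⊗[k] V)
    (hYBE : leftTwist LinearMap.id B ∘ₗ TensorProduct.map B LinearMap.id ∘ₗ
        leftTwist LinearMap.id B
      = TensorProduct.map B LinearMap.id ∘ₗ leftTwist LinearMap.id B ∘ₗ
        TensorProduct.map B LinearMap.id)
    (hcomm : TensorProduct.map α α ∘ₗ B = B ∘ₗ TensorProduct.map α α) :
    (TensorProduct.map α α ∘ₗ (TensorProduct.map α α ∘ₗ B)
      = (TensorProduct.map α α ∘ₗ B) ∘ₗ TensorProduct.map α α) ∧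
    (leftTwist α (TensorProduct.map α α ∘ₗ B) ∘ₗ
        TensorProduct.map (TensorProduct.map α α ∘ₗ B) α ∘ₗ
        leftTwist α (TensorProduct.map α α ∘ₗ B)
      = TensorProduct.map (TensorProduct.map α α ∘ₗ B) α ∘ₗ
        leftTwist α (TensorProduct.map α α ∘ₗ B) ∘ₗ
        TensorProduct.map (TensorProduct.map α α ∘ₗ B) α) := by
  constructor
  · rw [LinearMap.comp_assoc, hcomm, ← LinearMap.comp_assoc]
  · set c : (V ⊗[k] V) ⊗[k] V →ₗ[k] (V ⊗[k] V) ⊗[k] V :=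
      TensorProduct.map (TensorProduct.map α α) α with hc
    set a := leftTwist (LinearMap.id (R := k) (M := V)) B with ha
    set m := TensorProduct.map B (LinearMap.id (R := k) (M := V)) with hm
    have key3 : TensorProduct.map (TensorProduct.map α α ∘ₗ B) α = c ∘ₗ m := by
      rw [hc, hm, ← TensorProduct.map_comp]; simp
    have key4 : TensorProduct.map (TensorProduct.map α α ∘ₗ B) α = m ∘ₗ c := by
      rw [hcomm, hc, hm, ← TensorProduct.map_comp]; simp
    have hca : c * a = a * c := by
      rw [Module.End.mul_eq_comp, Module.End.mul_eq_comp, ← key1 α B, key2 α B hcomm]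
    have hcm : c * m = m * c := by
      rw [Module.End.mul_eq_comp, Module.End.mul_eq_comp, ← key3, key4]
    have hy : a * (m * a) = m * (a * m) := by
      simp only [Module.End.mul_eq_comp]; exact hYBE
    rw [key1 α B, key3]
    show (c * a) * ((c * m) * (c * a)) = (c * m) * ((c * a) * (c * m))
    have e1 : ∀ x : (V ⊗[k] V) ⊗[k] V →ₗ[k] (V ⊗[k] V) ⊗[k] V,
        c * x = x * c → ∀ w, x * (c * w) = c * (x * w) := by
      intro x hx w
      rw [← mul_assoc, ← hx, mul_assoc]
    calc (c * a) * ((c * m) * (c * a))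
        = c * (a * (c * (m * (c * a)))) := by simp only [mul_assoc]
      _ = c * (c * (c * (a * (m * a)))) := by
          rw [e1 m hcm, e1 a hca, e1 a hca]
      _ = c * (c * (c * (m * (a * m)))) := by rw [hy]
      _ = c * (m * (c * (a * (c * m)))) := by
          rw [e1 m hcm, e1 a hca, e1 m hcm]
      _ = (c * m) * ((c * a) * (c * m)) := by simp only [mul_assoc]
end

section
/- Let V be an N-dimensional vector space over C with basis {e₁,…,e_N}, N ≥ 2, and let q,λ be nonzero complex scalars with q² ≠ 1. Define B : V⊗V → V⊗V by B(eᵢ⊗eⱼ) = λq eᵢ⊗eᵢ if i=j, λ eⱼ⊗eᵢ if i<j, and λ eⱼ⊗eᵢ + λ(q−q⁻¹) eᵢ⊗eⱼ if i>j. Then a linear map α : V → V with matrix (a_{ij}) satisfies (α⊗α)∘B = B∘(α⊗α) if and only if (1) each column of (a_{ij}) has at most one non-zero entry, and (2) whenever 1 ≤ i < j ≤ N and a_{ki}·a_{lj} ≠ 0, then k < l. -/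
open TensorProduct

set_option maxHeartbeats 2000000 in
theorem stmt2 {V : Type*} [AddCommGroup V] [Module ℂ V] (N : ℕ) (hN : 2 ≤ N)
    (e : Module.Basis (Fin N) ℂ V) (q lam : ℂ) (hq : q ≠ 0) (hq2 : q ^ 2 ≠ 1) (hlam : lam ≠ 0)
    (B : V ⊗[ℂ] V →ₗ[ℂ] V ⊗[ℂ] V)
    (hB : ∀ i j : Fin N, B (e i ⊗ₜ e j) =
      if i = j then (lam * q) • (e i ⊗ₜ e i)
      else if i < j then lam • (e j ⊗ₜ e i)
      else lam • (e j ⊗ₜ e i) + (lam * (q - q⁻¹)) • (e i ⊗ₜ e j))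
    (α : V →ₗ[ℂ] V) :
    (TensorProduct.map α α ∘ₗ B = B ∘ₗ TensorProduct.map α α) ↔
      ((∀ i k l : Fin N, e.repr (α (e i)) k ≠ 0 → e.repr (α (e i)) l ≠ 0 → k = l) ∧
       (∀ i j k l : Fin N, i < j → e.repr (α (e i)) k * e.repr (α (e j)) l ≠ 0 → k < l)) := by
  classical
  have hq1 : q ≠ 1 := by
    intro h; exact hq2 (by rw [h]; ring)
  have hqi : q⁻¹ ≠ 1 := by
    intro h; exact hq1 (by rw [← inv_inv q, h, inv_one])
  have hqq : q - q⁻¹ ≠ 0 := by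
    intro h
    apply hq2
    have h2 : q * (q - q⁻¹) = q ^ 2 - 1 := by
      rw [mul_sub, mul_inv_cancel₀ hq]; ring
    rw [h, mul_zero] at h2
    linear_combination -h2
  set bb := e.tensorProduct e with hbb
  have hrepr : ∀ (x y : V) (m n : Fin N),
      bb.repr (x ⊗ₜ y) (m, n) = e.repr x m * e.repr y n := by
    intro x y m n
    rw [hbb, Module.Basis.tensorProduct_repr_tmul_apply, smul_eq_mul, mul_comm]
  -- coefficient of B on basis vectors
  have hc : ∀ k l m n : Fin N, bb.repr (B (e k ⊗ₜ e l)) (m, n) =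
      (if l = m then (if k = n then (if k = l then lam * q else lam) else 0) else 0) +
      (if l = n then (if k = m then (if l < k then lam * (q - q⁻¹) else 0) else 0) else 0) := by
    intro k l m n
    rw [hB k l]
    rcases lt_trichotomy k l with h | h | h
    · rw [if_neg h.ne, if_pos h]
      rw [map_smul, Finsupp.smul_apply, hrepr, smul_eq_mul]
      simp only [Module.Basis.repr_self, Finsupp.single_apply]
      have h' : ¬ l < k := not_lt.mpr h.le
      split_ifs <;> simp_all <;> ring
    · subst h
      rw [if_pos rfl]
      rw [map_smul, Finsupp.smul_apply, hrepr, smul_eq_mul]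
      simp only [Module.Basis.repr_self, Finsupp.single_apply]
      have h' : ¬ k < k := lt_irrefl k
      split_ifs <;> simp_all <;> ring
    · rw [if_neg h.ne', if_neg (not_lt.mpr h.le)]
      rw [map_add, map_smul, map_smul, Finsupp.add_apply, Finsupp.smul_apply,
        Finsupp.smul_apply, hrepr, hrepr, smul_eq_mul, smul_eq_mul]
      simp only [Module.Basis.repr_self, Finsupp.single_apply]
      split_ifs <;> simp_all <;> ring
  have hexp : ∀ i j : Fin N, (TensorProduct.map α α) (e i ⊗ₜ[ℂ] e j) =
      ∑ k, ∑ l, (e.repr (α (e i)) k * e.repr (α (e j)) l) • (e k ⊗ₜ[ℂ] e l) := by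
    intro i j
    rw [TensorProduct.map_tmul]
    conv_lhs => rw [← e.sum_repr (α (e i)), ← e.sum_repr (α (e j))]
    rw [TensorProduct.sum_tmul]
    refine Finset.sum_congr rfl fun k _ => ?_
    rw [TensorProduct.tmul_sum]
    refine Finset.sum_congr rfl fun l _ => ?_
    rw [TensorProduct.tmul_smul, TensorProduct.smul_tmul', smul_smul, mul_comm]
    exact (TensorProduct.smul_tmul' _ _ _).symm
  have hR : ∀ i j m n : Fin N, bb.repr ((B ∘ₗ TensorProduct.map α α) (e i ⊗ₜ e j)) (m, n) =
      (if n = m then lam * q else lam) * (e.repr (α (e i)) n * e.repr (α (e j)) m) +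
      (if n < m then lam * (q - q⁻¹) else 0) * (e.repr (α (e i)) m * e.repr (α (e j)) n) := by
    intro i j m n
    have expand : (B ∘ₗ TensorProduct.map α α) (e i ⊗ₜ[ℂ] e j)
        = ∑ k, ∑ l, (e.repr (α (e i)) k * e.repr (α (e j)) l) • B (e k ⊗ₜ[ℂ] e l) := by
      rw [LinearMap.comp_apply, hexp i j, map_sum]
      refine Finset.sum_congr rfl fun k _ => ?_
      rw [map_sum]
      refine Finset.sum_congr rfl fun l _ => ?_
      rw [map_smul]
    rw [expand, map_sum, Finset.sum_apply']
    have inner : ∀ k : Fin N,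
        (bb.repr (∑ l, (e.repr (α (e i)) k * e.repr (α (e j)) l) • B (e k ⊗ₜ[ℂ] e l))) (m, n)
        = (e.repr (α (e i)) k * e.repr (α (e j)) m) *
            (if k = n then (if k = m then lam * q else lam) else 0)
        + (e.repr (α (e i)) k * e.repr (α (e j)) n) *
            (if k = m then (if n < k then lam * (q - q⁻¹) else 0) else 0) := by
      intro k
      rw [map_sum, Finset.sum_apply']
      have hterm : ∀ l : Fin N,
          (bb.repr ((e.repr (α (e i)) k * e.repr (α (e j)) l) • B (e k ⊗ₜ[ℂ] e l))) (m, n)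
          = (e.repr (α (e i)) k * e.repr (α (e j)) l) *
              ((if l = m then (if k = n then (if k = l then lam * q else lam) else 0) else 0) +
               (if l = n then (if k = m then (if l < k then lam * (q - q⁻¹) else 0) else 0) else 0)) := by
        intro l
        rw [map_smul, Finsupp.smul_apply, smul_eq_mul, hc]
      rw [Finset.sum_congr rfl fun l _ => hterm l]
      simp only [mul_add]
      rw [Finset.sum_add_distrib]
      congr 1
      · rw [Finset.sum_eq_single m]
        · rw [if_pos rfl]
        · intro b _ hb; rw [if_neg hb, mul_zero]
        · intro hm; exact absurd (Finset.mem_univ m) hm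
      · rw [Finset.sum_eq_single n]
        · rw [if_pos rfl]
        · intro b _ hb; rw [if_neg hb, mul_zero]
        · intro hm; exact absurd (Finset.mem_univ n) hm
    rw [Finset.sum_congr rfl fun k _ => inner k]
    rw [Finset.sum_add_distrib]
    congr 1
    · rw [Finset.sum_eq_single n]
      · rw [if_pos rfl]; ring
      · intro b _ hb; rw [if_neg hb, mul_zero]
      · intro hm; exact absurd (Finset.mem_univ n) hm
    · rw [Finset.sum_eq_single m]
      · rw [if_pos rfl]; ring
      · intro b _ hb; rw [if_neg hb, mul_zero]
      · intro hm; exact absurd (Finset.mem_univ m) hm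
  have hL : ∀ i j m n : Fin N, bb.repr ((TensorProduct.map α α ∘ₗ B) (e i ⊗ₜ e j)) (m, n) =
      (if i = j then lam * q * (e.repr (α (e i)) m * e.repr (α (e i)) n)
       else if i < j then lam * (e.repr (α (e j)) m * e.repr (α (e i)) n)
       else lam * (e.repr (α (e j)) m * e.repr (α (e i)) n) +
         lam * (q - q⁻¹) * (e.repr (α (e i)) m * e.repr (α (e j)) n)) := by
    intro i j m n
    rw [LinearMap.comp_apply, hB i j]
    split_ifs with h1 h2 <;>
      simp only [map_add, map_smul, TensorProduct.map_tmul, Finsupp.add_apply,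
        Finsupp.smul_apply, smul_eq_mul, hrepr] <;> ring
  have key : (TensorProduct.map α α ∘ₗ B = B ∘ₗ TensorProduct.map α α) ↔
      ∀ i j m n : Fin N,
        bb.repr ((TensorProduct.map α α ∘ₗ B) (e i ⊗ₜ e j)) (m, n) =
        bb.repr ((B ∘ₗ TensorProduct.map α α) (e i ⊗ₜ e j)) (m, n) := by
    constructor
    · intro h i j m n; rw [h]
    · intro h
      apply bb.ext
      rintro ⟨i, j⟩
      have hb : bb (i, j) = e i ⊗ₜ[ℂ] e j := Module.Basis.tensorProduct_apply e e i j
      rw [hb]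
      apply bb.repr.injective
      ext mn
      obtain ⟨m, n⟩ := mn
      exact h i j m n
  rw [key]
  constructor
  · intro h
    constructor
    · intro i k l hk hl
      by_contra hne
      have hP : e.repr (α (e i)) k * e.repr (α (e i)) l ≠ 0 := mul_ne_zero hk hl
      have H := h i i k l
      rw [hL, hR, if_pos rfl] at H
      rcases Ne.lt_or_gt hne with hkl | hlk
      · rw [if_neg (ne_of_gt hkl), if_neg (not_lt.mpr hkl.le)] at H
        have h0 : lam * (q - 1) * (e.repr (α (e i)) k * e.repr (α (e i)) l) = 0 := by
          linear_combination H
        rcases mul_eq_zero.mp h0 with h' | h'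
        · exact absurd h' (mul_ne_zero hlam (sub_ne_zero.mpr hq1))
        · exact hP h'
      · rw [if_neg (ne_of_lt hlk), if_pos hlk] at H
        have h0 : lam * (q⁻¹ - 1) * (e.repr (α (e i)) k * e.repr (α (e i)) l) = 0 := by
          linear_combination H
        rcases mul_eq_zero.mp h0 with h' | h'
        · exact absurd h' (mul_ne_zero hlam (sub_ne_zero.mpr hqi))
        · exact hP h'
    · intro i j k l hij hprod
      by_contra hkl
      rcases (not_lt.mp hkl).eq_or_lt with hlk | hlk
      · subst hlk
        have H := h i j l l
        rw [hL, hR, if_neg (ne_of_lt hij), if_pos hij, if_pos rfl,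
          if_neg (lt_irrefl l)] at H
        have h0 : lam * (1 - q) * (e.repr (α (e i)) l * e.repr (α (e j)) l) = 0 := by
          linear_combination H
        rcases mul_eq_zero.mp h0 with h' | h'
        · exact absurd h' (mul_ne_zero hlam (sub_ne_zero.mpr (Ne.symm hq1)))
        · exact hprod h'
      · have H := h i j k l
        rw [hL, hR, if_neg (ne_of_lt hij), if_pos hij, if_neg (ne_of_lt hlk),
          if_pos hlk] at H
        have h0 : lam * (q - q⁻¹) * (e.repr (α (e i)) k * e.repr (α (e j)) l) = 0 := by
          linear_combination -H
        rcases mul_eq_zero.mp h0 with h' | h'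
        · exact absurd h' (mul_ne_zero hlam hqq)
        · exact hprod h'
  · rintro ⟨h1, h2⟩ i j m n
    have hD1 : ∀ (i m n : Fin N), m ≠ n →
        e.repr (α (e i)) m * e.repr (α (e i)) n = 0 := by
      intro i m n hmn
      by_contra hP
      exact hmn (h1 i m n (left_ne_zero_of_mul hP) (right_ne_zero_of_mul hP))
    have hD2 : ∀ (i j m n : Fin N), i < j → ¬ m < n →
        e.repr (α (e i)) m * e.repr (α (e j)) n = 0 := by
      intro i j m n hij hmn
      by_contra hP
      exact hmn (h2 i j m n hij hP)
    rw [hL, hR]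
    rcases lt_trichotomy i j with hij | rfl | hji
    · rw [if_neg (ne_of_lt hij), if_pos hij]
      rcases lt_trichotomy n m with h | rfl | h
      · rw [if_neg (ne_of_lt h), if_pos h]
        have hz := hD2 i j m n hij (not_lt.mpr h.le)
        linear_combination (-(lam * (q - q⁻¹))) * hz
      · rw [if_pos rfl, if_neg (lt_irrefl n)]
        have hz := hD2 i j n n hij (lt_irrefl n)
        linear_combination (lam - lam * q) * hz
      · rw [if_neg (ne_of_gt h), if_neg (not_lt.mpr h.le)]
        ring
    · rw [if_pos rfl]
      rcases eq_or_ne m n with rfl | hmn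
      · rw [if_pos rfl, if_neg (lt_irrefl m)]
        ring
      · have hz := hD1 i m n hmn
        rw [if_neg (Ne.symm hmn)]
        split_ifs
        · linear_combination (lam * q - lam - lam * (q - q⁻¹)) * hz
        · linear_combination (lam * q - lam) * hz
    · rw [if_neg (ne_of_gt hji), if_neg (not_lt.mpr hji.le)]
      rcases lt_trichotomy n m with h | rfl | h
      · rw [if_neg (ne_of_lt h), if_pos h]
        ring
      · rw [if_pos rfl, if_neg (lt_irrefl n)]
        have hz := hD2 j i n n hji (lt_irrefl n)
        linear_combination (lam + lam * (q - q⁻¹) - lam * q) * hz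
      · rw [if_neg (ne_of_gt h), if_neg (not_lt.mpr h.le)]
        have hz := hD2 j i n m hji (not_lt.mpr h.le)
        linear_combination (lam * (q - q⁻¹)) * hz
end

section
/- Let g and h be Lie algebras over a field, α : g → g and β : h → h Lie algebra morphisms with β injective. Then the Hom-Lie algebras g_α = (g, α∘[−,−], α) and h_β = (h, β∘[−,−], β) are isomorphic (i.e., there is a linear isomorphism γ : g → h with γ∘α = β∘γ and γ(α[x,y]) = β[γx,γy] for all x,y) if and only if there exists a Lie algebra isomorphism γ : g → h such that γ∘α = β∘γ. -/
theorem stmt3 {k g h : Type*} [Field k]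
    [LieRing g] [LieAlgebra k g] [LieRing h] [LieAlgebra k h]
    (α : g →ₗ[k] g) (β : h →ₗ[k] h)
    (hα : ∀ x y : g, α ⁅x, y⁆ = ⁅α x, α y⁆)
    (hβ : ∀ x y : h, β ⁅x, y⁆ = ⁅β x, β y⁆)
    (hβinj : Function.Injective β) :
    (∃ γ : g ≃ₗ[k] h, (∀ x, γ (α x) = β (γ x)) ∧
        ∀ x y, γ (α ⁅x, y⁆) = β ⁅γ x, γ y⁆) ↔
    (∃ γ : g ≃ₗ[k] h, (∀ x y, γ ⁅x, y⁆ = ⁅γ x, γ y⁆) ∧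
        ∀ x, γ (α x) = β (γ x)) := by
  constructor
  · rintro ⟨γ, h1, h2⟩
    exact ⟨γ, fun x y => hβinj (by rw [← h1, h2]), h1⟩
  · rintro ⟨γ, h1, h2⟩
    exact ⟨γ, h2, fun x y => by rw [h2, h1]⟩
end

section
/- Let g be a Lie algebra and α, β : g → g Lie algebra automorphisms. Then the Hom-Lie algebras g_α = (g, α∘[−,−], α) and g_β = (g, β∘[−,−], β) are isomorphic if and only if α and β are conjugate in the group of Lie algebra automorphisms of g, i.e., there exists a Lie algebra automorphism γ of g with γ∘α = β∘γ. -/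
theorem stmt4 {k g : Type*} [Field k] [LieRing g] [LieAlgebra k g]
    (α β : g ≃ₗ[k] g)
    (hα : ∀ x y : g, α ⁅x, y⁆ = ⁅α x, α y⁆)
    (hβ : ∀ x y : g, β ⁅x, y⁆ = ⁅β x, β y⁆) :
    (∃ γ : g ≃ₗ[k] g, (∀ x, γ (α x) = β (γ x)) ∧
        ∀ x y, γ (α ⁅x, y⁆) = β ⁅γ x, γ y⁆) ↔
    (∃ γ : g ≃ₗ[k] g, (∀ x y, γ ⁅x, y⁆ = ⁅γ x, γ y⁆) ∧
        ∀ x, γ (α x) = β (γ x)) := by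
  constructor
  · rintro ⟨γ, hcomm, hbr⟩
    refine ⟨γ, fun x y => ?_, hcomm⟩
    apply β.injective
    rw [← hcomm, hbr]
  · rintro ⟨γ, hbr, hcomm⟩
    exact ⟨γ, hcomm, fun x y => by rw [hcomm, hbr, hβ]⟩
end

section
/- Let g be a Lie algebra and α : g → g a Lie algebra morphism. Then the bracket [x,y]_α := α([x,y]) together with α makes g into a Hom-Lie algebra: [−,−]_α is bilinear and skew-symmetric, α is multiplicative with respect to [−,−]_α, and the Hom-Jacobi identity [[x,y]_α, α(z)]_α + [[z,x]_α, α(y)]_α + [[y,z]_α, α(x)]_α = 0 holds for all x,y,z ∈ g. -/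
theorem stmt5 {k g : Type*} [Field k] [LieRing g] [LieAlgebra k g]
    (α : g →ₗ[k] g) (hα : ∀ x y : g, α ⁅x, y⁆ = ⁅α x, α y⁆) :
    -- bilinearity of [x,y]_α := α [x,y]
    (∀ x x' y : g, α ⁅x + x', y⁆ = α ⁅x, y⁆ + α ⁅x', y⁆) ∧
    (∀ (c : k) (x y : g), α ⁅c • x, y⁆ = c • α ⁅x, y⁆) ∧
    (∀ x y y' : g, α ⁅x, y + y'⁆ = α ⁅x, y⁆ + α ⁅x, y'⁆) ∧
    (∀ (c : k) (x y : g), α ⁅x, c • y⁆ = c • α ⁅x, y⁆) ∧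
    -- skew-symmetry
    (∀ x y : g, α ⁅x, y⁆ = - α ⁅y, x⁆) ∧
    -- multiplicativity of α with respect to [-,-]_α
    (∀ x y : g, α (α ⁅x, y⁆) = α ⁅α x, α y⁆) ∧
    -- Hom-Jacobi identity
    (∀ x y z : g,
      α ⁅α ⁅x, y⁆, α z⁆ + α ⁅α ⁅z, x⁆, α y⁆ + α ⁅α ⁅y, z⁆, α x⁆ = 0) := by
  refine ⟨fun x x' y => by rw [add_lie, map_add],
    fun c x y => by rw [smul_lie, map_smul],
    fun x y y' => by rw [lie_add, map_add],
    fun c x y => by rw [lie_smul, map_smul],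
    fun x y => by rw [← lie_skew, map_neg],
    fun x y => by rw [hα],
    fun x y z => ?_⟩
  rw [← hα ⁅x, y⁆ z, ← hα ⁅z, x⁆ y, ← hα ⁅y, z⁆ x]
  have h : ⁅⁅x, y⁆, z⁆ + ⁅⁅z, x⁆, y⁆ + ⁅⁅y, z⁆, x⁆ = 0 := by
    rw [← lie_skew ⁅x, y⁆ z, ← lie_skew ⁅z, x⁆ y, ← lie_skew ⁅y, z⁆ x]
    linear_combination (norm := module) - lie_jacobi x y z
  simp only [← map_add, h, map_zero]
end

section
/- Let L = span_C{X,Y,Z} be the Lie algebra with bracket determined by [Y,Z]=0, [Y,X]=(1/2)Y, [Z,X]=(1/2)Z (the linear dual of sl(2), isomorphic to the (1+1)-Poincaré algebra). A linear map α : L → L is a Lie algebra morphism if and only if its matrix with respect to {X,Y,Z} has one of the two forms: α₁ = [[1,0,0],[a_{21},a_{22},a_{23}],[a_{31},a_{32},a_{33}]], or α₂ = [[a_{11},0,0],[a_{21},0,0],[a_{31},0,0]] with a_{11} ≠ 1. -/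
theorem stmt9 {L : Type*} [LieRing L] [LieAlgebra ℂ L]
    (b : Module.Basis (Fin 3) ℂ L)
    (hYZ : ⁅b 1, b 2⁆ = 0)
    (hYX : ⁅b 1, b 0⁆ = (1 / 2 : ℂ) • b 1)
    (hZX : ⁅b 2, b 0⁆ = (1 / 2 : ℂ) • b 2)
    (α : L →ₗ[ℂ] L) :
    (∀ u v : L, α ⁅u, v⁆ = ⁅α u, α v⁆) ↔
      ((b.repr (α (b 0)) 0 = 1 ∧ b.repr (α (b 1)) 0 = 0 ∧ b.repr (α (b 2)) 0 = 0) ∨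
       (α (b 1) = 0 ∧ α (b 2) = 0 ∧ b.repr (α (b 0)) 0 ≠ 1)) := by
  have hb : ∀ x : L, x = b.repr x 0 • b 0 + b.repr x 1 • b 1 + b.repr x 2 • b 2 := by
    intro x
    have := b.sum_repr x
    rw [Fin.sum_univ_three] at this
    exact this.symm
  have h01 : ⁅b 0, b 1⁆ = -((1/2 : ℂ) • b 1) := by rw [← lie_skew, hYX]
  have h02 : ⁅b 0, b 2⁆ = -((1/2 : ℂ) • b 2) := by rw [← lie_skew, hZX]
  have h21 : ⁅b 2, b 1⁆ = 0 := by rw [← lie_skew, hYZ, neg_zero]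
  have brk : ∀ x y : L, ⁅x, y⁆ =
      ((1/2) * (b.repr x 1 * b.repr y 0 - b.repr x 0 * b.repr y 1)) • b 1 +
      ((1/2) * (b.repr x 2 * b.repr y 0 - b.repr x 0 * b.repr y 2)) • b 2 := by
    intro x y
    conv_lhs => rw [hb x, hb y]
    simp only [add_lie, lie_add, smul_lie, lie_smul, lie_self, hYZ, hYX, hZX, h01, h02, h21,
      smul_zero, zero_add, add_zero, smul_neg, smul_smul]
    module
  have coord : ∀ (c0 c1 c2 d0 d1 d2 : ℂ),
      c0 • b 0 + c1 • b 1 + c2 • b 2 = d0 • b 0 + d1 • b 1 + d2 • b 2 →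
      c0 = d0 ∧ c1 = d1 ∧ c2 = d2 := by
    intro c0 c1 c2 d0 d1 d2 h
    have h0 := congrArg (fun z => b.repr z 0) h
    have h1 := congrArg (fun z => b.repr z 1) h
    have h2 := congrArg (fun z => b.repr z 2) h
    simp [Finsupp.single_apply] at h0 h1 h2
    exact ⟨h0, h1, h2⟩
  set p0 := b.repr (α (b 0)) 0 with hp0def
  set p1 := b.repr (α (b 0)) 1 with hp1def
  set p2 := b.repr (α (b 0)) 2 with hp2def
  set q0 := b.repr (α (b 1)) 0 with hq0def
  set q1 := b.repr (α (b 1)) 1 with hq1def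
  set q2 := b.repr (α (b 1)) 2 with hq2def
  set r0 := b.repr (α (b 2)) 0 with hr0def
  set r1 := b.repr (α (b 2)) 1 with hr1def
  set r2 := b.repr (α (b 2)) 2 with hr2def
  constructor
  · intro h
    have e1 := h (b 1) (b 0)
    rw [hYX, map_smul, brk (α (b 1)) (α (b 0))] at e1
    conv at e1 => lhs; rw [hb (α (b 1))]
    rw [smul_add, smul_add, smul_smul, smul_smul, smul_smul] at e1
    have e1' : (1/2*q0) • b 0 + (1/2*q1) • b 1 + (1/2*q2) • b 2 =
        (0:ℂ) • b 0 + (1/2*(q1*p0 - q0*p1)) • b 1 + (1/2*(q2*p0 - q0*p2)) • b 2 := by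
      rw [zero_smul, zero_add]; exact e1
    obtain ⟨hq0, hq1, hq2⟩ := coord _ _ _ _ _ _ e1'
    have e2 := h (b 2) (b 0)
    rw [hZX, map_smul, brk (α (b 2)) (α (b 0))] at e2
    conv at e2 => lhs; rw [hb (α (b 2))]
    rw [smul_add, smul_add, smul_smul, smul_smul, smul_smul] at e2
    have e2' : (1/2*r0) • b 0 + (1/2*r1) • b 1 + (1/2*r2) • b 2 =
        (0:ℂ) • b 0 + (1/2*(r1*p0 - r0*p1)) • b 1 + (1/2*(r2*p0 - r0*p2)) • b 2 := by
      rw [zero_smul, zero_add]; exact e2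
    obtain ⟨hr0, hr1, hr2⟩ := coord _ _ _ _ _ _ e2'
    have hq0' : q0 = 0 := by linear_combination 2 * hq0
    have hr0' : r0 = 0 := by linear_combination 2 * hr0
    by_cases hp : p0 = 1
    · exact Or.inl ⟨hp, hq0', hr0'⟩
    · refine Or.inr ⟨?_, ?_, hp⟩
      · have hq1' : q1 = 0 := by
          have hm : q1 * (p0 - 1) = 0 := by linear_combination -2 * hq1 + p1 * hq0'
          rcases mul_eq_zero.mp hm with h' | h'
          · exact h'
          · exact absurd (sub_eq_zero.mp h') hp
        have hq2' : q2 = 0 := by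
          have hm : q2 * (p0 - 1) = 0 := by linear_combination -2 * hq2 + p2 * hq0'
          rcases mul_eq_zero.mp hm with h' | h'
          · exact h'
          · exact absurd (sub_eq_zero.mp h') hp
        rw [hb (α (b 1)), ← hq0def, ← hq1def, ← hq2def, hq0', hq1', hq2']
        simp
      · have hr1' : r1 = 0 := by
          have hm : r1 * (p0 - 1) = 0 := by linear_combination -2 * hr1 + p1 * hr0'
          rcases mul_eq_zero.mp hm with h' | h'
          · exact h'
          · exact absurd (sub_eq_zero.mp h') hp
        have hr2' : r2 = 0 := by
          have hm : r2 * (p0 - 1) = 0 := by linear_combination -2 * hr2 + p2 * hr0'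
          rcases mul_eq_zero.mp hm with h' | h'
          · exact h'
          · exact absurd (sub_eq_zero.mp h') hp
        rw [hb (α (b 2)), ← hr0def, ← hr1def, ← hr2def, hr0', hr1', hr2']
        simp
  · intro h u v
    have hu : α u = b.repr u 0 • α (b 0) + b.repr u 1 • α (b 1) + b.repr u 2 • α (b 2) := by
      conv_lhs => rw [hb u]
      simp [map_add, map_smul]
    have hv : α v = b.repr v 0 • α (b 0) + b.repr v 1 • α (b 1) + b.repr v 2 • α (b 2) := by
      conv_lhs => rw [hb v]
      simp [map_add, map_smul]
    have hAu : ∀ i, b.repr (α u) i =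
        b.repr u 0 * b.repr (α (b 0)) i + b.repr u 1 * b.repr (α (b 1)) i +
        b.repr u 2 * b.repr (α (b 2)) i := by
      intro i
      rw [hu]
      simp [Finsupp.smul_apply, smul_eq_mul]
    have hAv : ∀ i, b.repr (α v) i =
        b.repr v 0 * b.repr (α (b 0)) i + b.repr v 1 * b.repr (α (b 1)) i +
        b.repr v 2 * b.repr (α (b 2)) i := by
      intro i
      rw [hv]
      simp [Finsupp.smul_apply, smul_eq_mul]
    rw [brk u v, map_add, map_smul, map_smul]
    rcases h with ⟨hP, hQ, hR⟩ | ⟨hQ, hR, hP⟩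
    · rw [hb (α (b 1)), hb (α (b 2)), brk (α u) (α v), hAu 0, hAu 1, hAu 2,
        hAv 0, hAv 1, hAv 2, ← hp0def, ← hp1def, ← hp2def, ← hq0def, ← hq1def, ← hq2def,
        ← hr0def, ← hr1def, ← hr2def, hP, hQ, hR]
      module
    · rw [brk (α u) (α v), hAu 0, hAu 1, hAu 2, hAv 0, hAv 1, hAv 2, hQ, hR]
      simp only [map_zero, Finsupp.coe_zero, Pi.zero_apply]
      module
end

section
/- Let sl(2) = span_C{X,Y,Z} with brackets [X,Y]=2Y, [X,Z]=−2Z, [Y,Z]=X, and let α : sl(2) → sl(2) be a linear map with matrix (a_{ij}) with respect to {X,Y,Z}. If α is a Lie algebra morphism with a_{12} = a_{13} = 0, then either α = 0, or α has matrix [[1,0,0],[0,a_{22},0],[0,0,a_{22}⁻¹]] with a_{22} ≠ 0, or α has matrix [[−1,0,0],[0,0,a_{32}⁻¹],[0,a_{32},0]] with a_{32} ≠ 0. -/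
theorem stmt11 {L : Type*} [LieRing L] [LieAlgebra ℂ L]
    (b : Module.Basis (Fin 3) ℂ L)
    (hXY : ⁅b 0, b 1⁆ = (2 : ℂ) • b 1)
    (hXZ : ⁅b 0, b 2⁆ = (-2 : ℂ) • b 2)
    (hYZ : ⁅b 1, b 2⁆ = b 0)
    (α : L →ₗ[ℂ] L) (hα : ∀ u v : L, α ⁅u, v⁆ = ⁅α u, α v⁆)
    (h12 : b.repr (α (b 1)) 0 = 0) (h13 : b.repr (α (b 2)) 0 = 0) :
    α = 0 ∨
    (∃ t : ℂ, t ≠ 0 ∧ α (b 0) = b 0 ∧ α (b 1) = t • b 1 ∧ α (b 2) = t⁻¹ • b 2) ∨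
    (∃ s : ℂ, s ≠ 0 ∧ α (b 0) = -b 0 ∧ α (b 1) = s • b 2 ∧ α (b 2) = s⁻¹ • b 1) := by
  classical
  have hrep : ∀ x : L, x = b.repr x 0 • b 0 + b.repr x 1 • b 1 + b.repr x 2 • b 2 := by
    intro x
    have h := b.sum_repr x
    rw [Fin.sum_univ_three] at h
    exact h.symm
  set a := b.repr (α (b 0)) 0 with ha
  set B := b.repr (α (b 0)) 1 with hB
  set c := b.repr (α (b 0)) 2 with hc
  set p := b.repr (α (b 1)) 1 with hp
  set q := b.repr (α (b 1)) 2 with hq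
  set r := b.repr (α (b 2)) 1 with hr
  set s := b.repr (α (b 2)) 2 with hs
  have hα0 : α (b 0) = a • b 0 + B • b 1 + c • b 2 := hrep _
  have hα1 : α (b 1) = p • b 1 + q • b 2 := by
    have h := hrep (α (b 1)); rw [h12, zero_smul, zero_add] at h; exact h
  have hα2 : α (b 2) = r • b 1 + s • b 2 := by
    have h := hrep (α (b 2)); rw [h13, zero_smul, zero_add] at h; exact h
  have h10 : ⁅b 1, b 0⁆ = -((2:ℂ) • b 1) := by rw [← lie_skew, hXY]
  have h20 : ⁅b 2, b 0⁆ = -((-2:ℂ) • b 2) := by rw [← lie_skew, hXZ]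
  have h21 : ⁅b 2, b 1⁆ = -(b 0) := by rw [← lie_skew, hYZ]
  -- equation from [X,Y] = 2Y
  have E1 : α ⁅b 0, b 1⁆ = ⁅α (b 0), α (b 1)⁆ := hα _ _
  rw [hXY, map_smul, hα0, hα1] at E1
  simp only [lie_add, add_lie, lie_smul, smul_lie, lie_self, hXY, hXZ, hYZ, h10, h20, h21,
    smul_zero, zero_add, add_zero, smul_neg, smul_smul, smul_add] at E1
  have F1 := fun j => congrArg (fun x => b.repr x j) E1
  simp only [map_add, map_smul, map_neg, Module.Basis.repr_self, Finsupp.smul_apply, Finsupp.add_apply,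
    Finsupp.coe_neg, Pi.neg_apply, Finsupp.single_apply, smul_eq_mul] at F1
  have F10 := F1 0
  have F11 := F1 1
  have F12 := F1 2
  norm_num [Fin.ext_iff] at F10 F11 F12
  -- equation from [X,Z] = -2Z
  have E2 : α ⁅b 0, b 2⁆ = ⁅α (b 0), α (b 2)⁆ := hα _ _
  rw [hXZ, map_smul, hα0, hα2] at E2
  simp only [lie_add, add_lie, lie_smul, smul_lie, lie_self, hXY, hXZ, hYZ, h10, h20, h21,
    smul_zero, zero_add, add_zero, smul_neg, smul_smul, smul_add] at E2
  have F2 := fun j => congrArg (fun x => b.repr x j) E2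
  simp only [map_add, map_smul, map_neg, Module.Basis.repr_self, Finsupp.smul_apply, Finsupp.add_apply,
    Finsupp.coe_neg, Pi.neg_apply, Finsupp.single_apply, smul_eq_mul] at F2
  have F20 := F2 0
  have F21 := F2 1
  have F22 := F2 2
  norm_num [Fin.ext_iff] at F20 F21 F22
  -- equation from [Y,Z] = X
  have E3 : α ⁅b 1, b 2⁆ = ⁅α (b 1), α (b 2)⁆ := hα _ _
  rw [hYZ, hα0, hα1, hα2] at E3
  simp only [lie_add, add_lie, lie_smul, smul_lie, lie_self, hXY, hXZ, hYZ, h10, h20, h21,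
    smul_zero, zero_add, add_zero, smul_neg, smul_smul, smul_add] at E3
  have F3 := fun j => congrArg (fun x => b.repr x j) E3
  simp only [map_add, map_smul, map_neg, Module.Basis.repr_self, Finsupp.smul_apply, Finsupp.add_apply,
    Finsupp.coe_neg, Pi.neg_apply, Finsupp.single_apply, smul_eq_mul] at F3
  have F30 := F3 0
  have F31 := F3 1
  have F32 := F3 2
  norm_num [Fin.ext_iff] at F30 F31 F32
  by_cases ha0 : a = 0
  · left
    have hp0 : p = 0 := by rw [ha0] at F11; linear_combination F11 / 2
    have hq0 : q = 0 := by rw [ha0] at F12; linear_combination F12 / 2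
    have hr0 : r = 0 := by rw [ha0] at F21; linear_combination -F21 / 2
    have hs0 : s = 0 := by rw [ha0] at F22; linear_combination F22 / 2
    have hz0 : α (b 0) = 0 := by rw [hα0, ha0, F31, F32]; simp
    have hz1 : α (b 1) = 0 := by rw [hα1, hp0, hq0]; simp
    have hz2 : α (b 2) = 0 := by rw [hα2, hr0, hs0]; simp
    apply b.ext
    intro i
    fin_cases i <;> simp [hz0, hz1, hz2]
  · by_cases hp0 : p = 0
    · -- a = -1 case
      have hq0 : q ≠ 0 := by
        intro h
        rw [hp0, h] at F30
        apply ha0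
        simpa using F30
      have ham1 : a = -1 := by
        have h : q * ((a + 1) * 2) = 0 := by linear_combination F12
        rcases mul_eq_zero.mp h with h' | h'
        · exact absurd h' hq0
        · rcases mul_eq_zero.mp h' with h'' | h''
          · linear_combination h''
          · norm_num at h''
      have hs0 : s = 0 := by rw [ham1] at F22; linear_combination F22 / 4
      have hrq : r * q = 1 := by rw [ham1, hp0] at F30; linear_combination F30
      have hrinv : r = q⁻¹ := by field_simp; linear_combination hrq
      right; right
      refine ⟨q, hq0, ?_, ?_, ?_⟩
      · rw [hα0, ham1, F31, F32]; simp
      · rw [hα1, hp0]; simp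
      · rw [hα2, hs0, hrinv]; simp
    · -- a = 1 case
      have ha1 : a = 1 := by
        have h : p * ((a - 1) * 2) = 0 := by linear_combination -F11
        rcases mul_eq_zero.mp h with h' | h'
        · exact absurd h' hp0
        · rcases mul_eq_zero.mp h' with h'' | h''
          · linear_combination h''
          · norm_num at h''
      have hq0 : q = 0 := by rw [ha1] at F12; linear_combination F12 / 4
      have hr0 : r = 0 := by rw [ha1] at F21; linear_combination -F21 / 4
      have hsp : s * p = 1 := by rw [ha1, hq0, hr0] at F30; linear_combination -F30
      have hsinv : s = p⁻¹ := by field_simp; linear_combination hsp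
      right; left
      refine ⟨p, hp0, ?_, ?_, ?_⟩
      · rw [hα0, ha1, F31, F32]; simp
      · rw [hα1, hq0]; simp
      · rw [hα2, hr0, hsinv]; simp
end

section
/- Let B : V⊗V → V⊗V be a solution of the Hom-Yang-Baxter equation for (V,α), i.e., B commutes with α⊗α and (α⊗B)∘(B⊗α)∘(α⊗B) = (B⊗α)∘(α⊗B)∘(B⊗α). For n ≥ 3 and 1 ≤ i ≤ n−1 define Bᵢ : V^{⊗n} → V^{⊗n} by Bᵢ = α^{⊗(i−1)} ⊗ B ⊗ α^{⊗(n−i−1)}. Then the operators Bᵢ satisfy the braid relations: BᵢBⱼ = BⱼBᵢ whenever |i−j| > 1, and BᵢB_{i+1}Bᵢ = B_{i+1}BᵢB_{i+1} for 1 ≤ i ≤ n−2. -/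
open CategoryTheory MonoidalCategory

set_option maxHeartbeats 4000000

/-- Iterated tensor power: `T M n` is `M^{⊗(n+1)}`. -/
noncomputable def T {k : Type*} [CommRing k] (M : ModuleCat k) : ℕ → ModuleCat k
  | 0 => M
  | n + 1 => M ⊗ T M n

/-- `α^{⊗(n+1)}` on `T M n`. -/
noncomputable def apow {k : Type*} [CommRing k] {M : ModuleCat k} (α : M ⟶ M) :
    ∀ n, T M n ⟶ T M n
  | 0 => α
  | n + 1 => α ⊗ₘ apow α n

/-- The operator `Bᵢ = α^{⊗ i} ⊗ₘ B ⊗ₘ α^{⊗ (n-1-i)}` on `T M (n+1) = M^{⊗(n+2)}`,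
acting by `B` on the tensor factors in (0-indexed) positions `i` and `i+1`
(and by junk for out-of-range `i`). -/
noncomputable def Bop {k : Type*} [CommRing k] {M : ModuleCat k}
    (α : M ⟶ M) (B : M ⊗ M ⟶ M ⊗ M) : ∀ (i n : ℕ), T M (n + 1) ⟶ T M (n + 1)
  | 0, 0 => B
  | 0, n + 1 => (α_ M M (T M n)).inv ≫ (B ⊗ₘ apow α n) ≫ (α_ M M (T M n)).hom
  | _ + 1, 0 => 𝟙 _
  | i + 1, n + 1 => α ⊗ₘ Bop α B i n

section Aux

variable {k : Type*} [CommRing k] {M : ModuleCat k} (α : M ⟶ M) (B : M ⊗ M ⟶ M ⊗ M)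

lemma Bop_zero_succ (n : ℕ) :
    Bop α B 0 (n + 1)
      = (α_ M M (T M n)).inv ≫ (B ⊗ₘ apow α n) ≫ (α_ M M (T M n)).hom := rfl

lemma Bop_succ_succ (i n : ℕ) :
    Bop α B (i + 1) (n + 1) = (α ⊗ₘ Bop α B i n : T M (n + 2) ⟶ T M (n + 2)) := rfl

/-- Pull a morphism of the shape `g ⊗ₘ (h ⊗ₘ d)` through the conjugated tensor on the right. -/
lemma conj_right {X : ModuleCat k} (f : M ⊗ M ⟶ M ⊗ M) (g h : M ⟶ M) (c d : X ⟶ X) :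
    ((α_ M M X).inv ≫ (f ⊗ₘ c) ≫ (α_ M M X).hom) ≫ (g ⊗ₘ (h ⊗ₘ d))
      = (α_ M M X).inv ≫ ((f ≫ (g ⊗ₘ h)) ⊗ₘ (c ≫ d)) ≫ (α_ M M X).hom := by
  rw [Category.assoc, Category.assoc, ← associator_naturality g h d,
    ← tensorHom_comp_tensorHom, Category.assoc]

lemma conj_left {X : ModuleCat k} (f : M ⊗ M ⟶ M ⊗ M) (g h : M ⟶ M) (c d : X ⟶ X) :
    (g ⊗ₘ (h ⊗ₘ d)) ≫ ((α_ M M X).inv ≫ (f ⊗ₘ c) ≫ (α_ M M X).hom)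
      = (α_ M M X).inv ≫ (((g ⊗ₘ h) ≫ f) ⊗ₘ (d ≫ c)) ≫ (α_ M M X).hom := by
  rw [← tensorHom_comp_tensorHom, ← Category.assoc, associator_inv_naturality, Category.assoc,
    Category.assoc]

/-- `Bop` commutes with the tensor power of `α`. -/
lemma Bop_apow_comm (hcomm : B ≫ (α ⊗ₘ α) = (α ⊗ₘ α) ≫ B) :
    ∀ i n, Bop α B i n ≫ apow α (n + 1) = apow α (n + 1) ≫ Bop α B i n := by
  intro i
  induction i with
  | zero =>
    intro n
    cases n with
    | zero => exact hcomm
    | succ m =>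
      show ((α_ M M (T M m)).inv ≫ (B ⊗ₘ apow α m) ≫ (α_ M M (T M m)).hom) ≫ (α ⊗ₘ (α ⊗ₘ apow α m))
          = (α ⊗ₘ (α ⊗ₘ apow α m)) ≫ ((α_ M M (T M m)).inv ≫ (B ⊗ₘ apow α m) ≫ (α_ M M (T M m)).hom)
      rw [conj_right, conj_left, hcomm]
  | succ i ih =>
    intro n
    cases n with
    | zero => simp [Bop]
    | succ m =>
      show (α ⊗ₘ Bop α B i m) ≫ (α ⊗ₘ apow α (m + 1))
          = (α ⊗ₘ apow α (m + 1)) ≫ (α ⊗ₘ Bop α B i m)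
      rw [tensorHom_comp_tensorHom, tensorHom_comp_tensorHom, ih m]

/-- Distant `Bop`s commute. -/
lemma Bop_far_comm (hcomm : B ≫ (α ⊗ₘ α) = (α ⊗ₘ α) ≫ B) :
    ∀ i j n, i + 2 ≤ j → j ≤ n →
      Bop α B i n ≫ Bop α B j n = Bop α B j n ≫ Bop α B i n := by
  intro i
  induction i with
  | zero =>
    intro j n hij hjn
    obtain ⟨j', rfl⟩ : ∃ j', j = j' + 2 := ⟨j - 2, by omega⟩
    obtain ⟨m, rfl⟩ : ∃ m, n = m + 2 := ⟨n - 2, by omega⟩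
    show ((α_ M M (T M (m + 1))).inv ≫ (B ⊗ₘ apow α (m + 1)) ≫ (α_ M M (T M (m + 1))).hom) ≫ (α ⊗ₘ (α ⊗ₘ Bop α B j' m))
        = (α ⊗ₘ (α ⊗ₘ Bop α B j' m)) ≫ ((α_ M M (T M (m + 1))).inv ≫ (B ⊗ₘ apow α (m + 1)) ≫ (α_ M M (T M (m + 1))).hom)
    rw [conj_right, conj_left, hcomm,
      show apow α (m + 1) ≫ Bop α B j' m = Bop α B j' m ≫ apow α (m + 1) from
        (Bop_apow_comm α B hcomm j' m).symm]
  | succ i ih =>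
    intro j n hij hjn
    obtain ⟨j', rfl⟩ : ∃ j', j = j' + 1 := ⟨j - 1, by omega⟩
    obtain ⟨m, rfl⟩ : ∃ m, n = m + 1 := ⟨n - 1, by omega⟩
    show (α ⊗ₘ Bop α B i m) ≫ (α ⊗ₘ Bop α B j' m)
        = (α ⊗ₘ Bop α B j' m) ≫ (α ⊗ₘ Bop α B i m)
    rw [tensorHom_comp_tensorHom, tensorHom_comp_tensorHom, ih j' m (by omega) (by omega)]

/-- Conjugation lemma identifying `Bop 1` with a reassociated tensor. -/
lemma conj_c1 {X : ModuleCat k} (a : X ⟶ X) :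
    ((𝟙 M ⊗ₘ (α_ M M X).inv) ≫ (α_ M (M ⊗ M) X).inv) ≫ ((α ⊗ₘ B) ⊗ₘ a) ≫
        ((α_ M (M ⊗ M) X).hom ≫ (𝟙 M ⊗ₘ (α_ M M X).hom))
      = α ⊗ₘ ((α_ M M X).inv ≫ (B ⊗ₘ a) ≫ (α_ M M X).hom) := by
  have h : (α_ M (M ⊗ M) X).inv ≫ (((α ⊗ₘ B) ⊗ₘ a) ≫ (α_ M (M ⊗ M) X).hom)
      = α ⊗ₘ (B ⊗ₘ a) := by
    rw [associator_naturality α B a, Iso.inv_hom_id_assoc]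
  calc ((𝟙 M ⊗ₘ (α_ M M X).inv) ≫ (α_ M (M ⊗ M) X).inv) ≫ ((α ⊗ₘ B) ⊗ₘ a) ≫
        ((α_ M (M ⊗ M) X).hom ≫ (𝟙 M ⊗ₘ (α_ M M X).hom))
      = (𝟙 M ⊗ₘ (α_ M M X).inv) ≫ ((α_ M (M ⊗ M) X).inv ≫ (((α ⊗ₘ B) ⊗ₘ a) ≫
          (α_ M (M ⊗ M) X).hom)) ≫ (𝟙 M ⊗ₘ (α_ M M X).hom) := by
        simp only [Category.assoc]
    _ = (𝟙 M ⊗ₘ (α_ M M X).inv) ≫ (α ⊗ₘ (B ⊗ₘ a)) ≫ (𝟙 M ⊗ₘ (α_ M M X).hom) := by rw [h]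
    _ = (𝟙 M ≫ α ≫ 𝟙 M) ⊗ₘ ((α_ M M X).inv ≫ (B ⊗ₘ a) ≫ (α_ M M X).hom) := by
        rw [← tensorHom_comp_tensorHom, ← tensorHom_comp_tensorHom]
    _ = α ⊗ₘ ((α_ M M X).inv ≫ (B ⊗ₘ a) ≫ (α_ M M X).hom) := by
        rw [Category.id_comp, Category.comp_id]

/-- Conjugation lemma identifying `Bop 0` with a reassociated tensor. -/
lemma conj_c2 {X : ModuleCat k} (a : X ⟶ X) :
    ((𝟙 M ⊗ₘ (α_ M M X).inv) ≫ (α_ M (M ⊗ M) X).inv) ≫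
        (((α_ M M M).inv ≫ (B ⊗ₘ α) ≫ (α_ M M M).hom) ⊗ₘ a) ≫
        ((α_ M (M ⊗ M) X).hom ≫ (𝟙 M ⊗ₘ (α_ M M X).hom))
      = (α_ M M (M ⊗ X)).inv ≫ (B ⊗ₘ (α ⊗ₘ a)) ≫ (α_ M M (M ⊗ X)).hom := by
  have hsplit : (((α_ M M M).inv ≫ (B ⊗ₘ α) ≫ (α_ M M M).hom) ⊗ₘ a)
      = ((α_ M M M).inv ⊗ₘ 𝟙 X) ≫ ((B ⊗ₘ α) ⊗ₘ a) ≫ ((α_ M M M).hom ⊗ₘ 𝟙 X) := by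
    simp only [tensorHom_comp_tensorHom, Category.id_comp, Category.comp_id]
  have h1 : ((𝟙 M ⊗ₘ (α_ M M X).inv) ≫ (α_ M (M ⊗ M) X).inv) ≫ ((α_ M M M).inv ⊗ₘ 𝟙 X)
      = (α_ M M (M ⊗ X)).inv ≫ (α_ (M ⊗ M) M X).inv := by
    simp only [id_tensorHom, tensorHom_id, Category.assoc]
    exact pentagon_inv
  have h2 : ((α_ M M M).hom ⊗ₘ 𝟙 X) ≫ ((α_ M (M ⊗ M) X).hom ≫ (𝟙 M ⊗ₘ (α_ M M X).hom))
      = (α_ (M ⊗ M) M X).hom ≫ (α_ M M (M ⊗ X)).hom := by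
    simp only [id_tensorHom, tensorHom_id, Category.assoc]
    exact pentagon M M M X
  have h3 : (α_ (M ⊗ M) M X).inv ≫ (((B ⊗ₘ α) ⊗ₘ a) ≫ (α_ (M ⊗ M) M X).hom)
      = B ⊗ₘ (α ⊗ₘ a) := by
    rw [associator_naturality B α a, Iso.inv_hom_id_assoc]
  calc ((𝟙 M ⊗ₘ (α_ M M X).inv) ≫ (α_ M (M ⊗ M) X).inv) ≫
        (((α_ M M M).inv ≫ (B ⊗ₘ α) ≫ (α_ M M M).hom) ⊗ₘ a) ≫
        ((α_ M (M ⊗ M) X).hom ≫ (𝟙 M ⊗ₘ (α_ M M X).hom))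
      = (((𝟙 M ⊗ₘ (α_ M M X).inv) ≫ (α_ M (M ⊗ M) X).inv) ≫ ((α_ M M M).inv ⊗ₘ 𝟙 X)) ≫
          ((B ⊗ₘ α) ⊗ₘ a) ≫ (((α_ M M M).hom ⊗ₘ 𝟙 X) ≫
          ((α_ M (M ⊗ M) X).hom ≫ (𝟙 M ⊗ₘ (α_ M M X).hom))) := by
        rw [hsplit]; simp only [Category.assoc]
    _ = ((α_ M M (M ⊗ X)).inv ≫ (α_ (M ⊗ M) M X).inv) ≫ ((B ⊗ₘ α) ⊗ₘ a) ≫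
          ((α_ (M ⊗ M) M X).hom ≫ (α_ M M (M ⊗ X)).hom) := by rw [h1, h2]
    _ = (α_ M M (M ⊗ X)).inv ≫ ((α_ (M ⊗ M) M X).inv ≫ (((B ⊗ₘ α) ⊗ₘ a) ≫
          (α_ (M ⊗ M) M X).hom)) ≫ (α_ M M (M ⊗ X)).hom := by
        simp only [Category.assoc]
    _ = (α_ M M (M ⊗ X)).inv ≫ (B ⊗ₘ (α ⊗ₘ a)) ≫ (α_ M M (M ⊗ X)).hom := by rw [h3]

/-- The braid relation for the two conjugated operators, given the HYBE. -/
lemma braid_conj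
    (hybe' : (α ⊗ₘ B) ≫ ((α_ M M M).inv ≫ (B ⊗ₘ α) ≫ (α_ M M M).hom) ≫ (α ⊗ₘ B)
      = ((α_ M M M).inv ≫ (B ⊗ₘ α) ≫ (α_ M M M).hom) ≫ (α ⊗ₘ B) ≫
          ((α_ M M M).inv ≫ (B ⊗ₘ α) ≫ (α_ M M M).hom))
    {X : ModuleCat k} (a : X ⟶ X) :
    ((α_ M M (M ⊗ X)).inv ≫ (B ⊗ₘ (α ⊗ₘ a)) ≫ (α_ M M (M ⊗ X)).hom) ≫
        (α ⊗ₘ ((α_ M M X).inv ≫ (B ⊗ₘ a) ≫ (α_ M M X).hom)) ≫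
        ((α_ M M (M ⊗ X)).inv ≫ (B ⊗ₘ (α ⊗ₘ a)) ≫ (α_ M M (M ⊗ X)).hom)
      = (α ⊗ₘ ((α_ M M X).inv ≫ (B ⊗ₘ a) ≫ (α_ M M X).hom)) ≫
        ((α_ M M (M ⊗ X)).inv ≫ (B ⊗ₘ (α ⊗ₘ a)) ≫ (α_ M M (M ⊗ X)).hom) ≫
        (α ⊗ₘ ((α_ M M X).inv ≫ (B ⊗ₘ a) ≫ (α_ M M X).hom)) := by
  set P : M ⊗ (M ⊗ M) ⟶ M ⊗ (M ⊗ M) :=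
    (α_ M M M).inv ≫ (B ⊗ₘ α) ≫ (α_ M M M).hom with hP
  set Φ : M ⊗ (M ⊗ (M ⊗ X)) ⟶ (M ⊗ (M ⊗ M)) ⊗ X :=
    (𝟙 M ⊗ₘ (α_ M M X).inv) ≫ (α_ M (M ⊗ M) X).inv with hΦ
  set Ψ : (M ⊗ (M ⊗ M)) ⊗ X ⟶ M ⊗ (M ⊗ (M ⊗ X)) :=
    (α_ M (M ⊗ M) X).hom ≫ (𝟙 M ⊗ₘ (α_ M M X).hom) with hΨ
  have hΨΦ : Ψ ≫ Φ = 𝟙 _ := by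
    rw [hΨ, hΦ]
    simp only [id_tensorHom, Category.assoc, whiskerLeft_hom_inv_assoc,
      Iso.hom_inv_id, Category.comp_id]
  have e1 : (α_ M M (M ⊗ X)).inv ≫ (B ⊗ₘ (α ⊗ₘ a)) ≫ (α_ M M (M ⊗ X)).hom
      = Φ ≫ (P ⊗ₘ a) ≫ Ψ := (conj_c2 α B a).symm
  have e2 : (α ⊗ₘ ((α_ M M X).inv ≫ (B ⊗ₘ a) ≫ (α_ M M X).hom))
      = Φ ≫ ((α ⊗ₘ B) ⊗ₘ a) ≫ Ψ := (conj_c1 α B a).symm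
  rw [e1, e2]
  have key : ∀ f g h : M ⊗ (M ⊗ M) ⟶ M ⊗ (M ⊗ M),
      (Φ ≫ (f ⊗ₘ a) ≫ Ψ) ≫ (Φ ≫ (g ⊗ₘ a) ≫ Ψ) ≫ (Φ ≫ (h ⊗ₘ a) ≫ Ψ)
        = Φ ≫ ((f ≫ g ≫ h) ⊗ₘ (a ≫ a ≫ a)) ≫ Ψ := by
    intro f g h
    calc (Φ ≫ (f ⊗ₘ a) ≫ Ψ) ≫ (Φ ≫ (g ⊗ₘ a) ≫ Ψ) ≫ (Φ ≫ (h ⊗ₘ a) ≫ Ψ)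
        = Φ ≫ (f ⊗ₘ a) ≫ ((Ψ ≫ Φ) ≫ (g ⊗ₘ a)) ≫ ((Ψ ≫ Φ) ≫ (h ⊗ₘ a)) ≫ Ψ := by
          simp only [Category.assoc]
      _ = Φ ≫ ((f ⊗ₘ a) ≫ (g ⊗ₘ a) ≫ (h ⊗ₘ a)) ≫ Ψ := by
          rw [hΨΦ]; simp only [Category.id_comp, Category.assoc]
      _ = Φ ≫ ((f ≫ g ≫ h) ⊗ₘ (a ≫ a ≫ a)) ≫ Ψ := by
          rw [← tensorHom_comp_tensorHom, ← tensorHom_comp_tensorHom]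
  rw [key, key, hybe']

/-- The braid relation for `Bop`. -/
lemma Bop_braid
    (hybe' : (α ⊗ₘ B) ≫ ((α_ M M M).inv ≫ (B ⊗ₘ α) ≫ (α_ M M M).hom) ≫ (α ⊗ₘ B)
      = ((α_ M M M).inv ≫ (B ⊗ₘ α) ≫ (α_ M M M).hom) ≫ (α ⊗ₘ B) ≫
          ((α_ M M M).inv ≫ (B ⊗ₘ α) ≫ (α_ M M M).hom)) :
    ∀ i n, i + 1 ≤ n →
      Bop α B i n ≫ Bop α B (i + 1) n ≫ Bop α B i n
        = Bop α B (i + 1) n ≫ Bop α B i n ≫ Bop α B (i + 1) n := by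
  intro i
  induction i with
  | zero =>
    intro n hn
    obtain ⟨m, rfl⟩ : ∃ m, n = m + 1 := ⟨n - 1, by omega⟩
    cases m with
    | zero =>
      show Bop α B 0 1 ≫ (α ⊗ₘ B) ≫ Bop α B 0 1 = (α ⊗ₘ B) ≫ Bop α B 0 1 ≫ (α ⊗ₘ B)
      rw [Bop_zero_succ]
      exact hybe'.symm
    | succ m' =>
      show ((α_ M M (M ⊗ T M m')).inv ≫ (B ⊗ₘ (α ⊗ₘ apow α m')) ≫
            (α_ M M (M ⊗ T M m')).hom) ≫
          (α ⊗ₘ ((α_ M M (T M m')).inv ≫ (B ⊗ₘ apow α m') ≫ (α_ M M (T M m')).hom)) ≫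
          ((α_ M M (M ⊗ T M m')).inv ≫ (B ⊗ₘ (α ⊗ₘ apow α m')) ≫
            (α_ M M (M ⊗ T M m')).hom)
        = (α ⊗ₘ ((α_ M M (T M m')).inv ≫ (B ⊗ₘ apow α m') ≫ (α_ M M (T M m')).hom)) ≫
          ((α_ M M (M ⊗ T M m')).inv ≫ (B ⊗ₘ (α ⊗ₘ apow α m')) ≫
            (α_ M M (M ⊗ T M m')).hom) ≫
          (α ⊗ₘ ((α_ M M (T M m')).inv ≫ (B ⊗ₘ apow α m') ≫ (α_ M M (T M m')).hom))
      exact braid_conj α B hybe' (apow α m')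
  | succ i ih =>
    intro n hn
    obtain ⟨m, rfl⟩ : ∃ m, n = m + 1 := ⟨n - 1, by omega⟩
    show (α ⊗ₘ Bop α B i m) ≫ (α ⊗ₘ Bop α B (i + 1) m) ≫ (α ⊗ₘ Bop α B i m)
        = (α ⊗ₘ Bop α B (i + 1) m) ≫ (α ⊗ₘ Bop α B i m) ≫ (α ⊗ₘ Bop α B (i + 1) m)
    rw [tensorHom_comp_tensorHom, tensorHom_comp_tensorHom, tensorHom_comp_tensorHom, tensorHom_comp_tensorHom,
      ih m (by omega)]

end Aux

theorem stmt15 {k : Type*} [Field k] (M : ModuleCat k)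
    (α : M ⟶ M) (B : M ⊗ M ⟶ M ⊗ M)
    -- B commutes with α ⊗ₘ α
    (hcomm : B ≫ (α ⊗ₘ α) = (α ⊗ₘ α) ≫ B)
    -- the Hom-Yang-Baxter equation for (M, α)
    (hybe : ((α_ M M M).hom ≫ (α ⊗ₘ B) ≫ (α_ M M M).inv) ≫ (B ⊗ₘ α) ≫
        ((α_ M M M).hom ≫ (α ⊗ₘ B) ≫ (α_ M M M).inv)
      = (B ⊗ₘ α) ≫ ((α_ M M M).hom ≫ (α ⊗ₘ B) ≫ (α_ M M M).inv) ≫ (B ⊗ₘ α))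
    (n : ℕ) (hn : 3 ≤ n) :
    -- the operators B₁, ..., B_{n-1} (here 0-indexed: `Bop α B i (n-2)` for
    -- `i = 0, ..., n-2`) on `M^{⊗ n} = T M (n-1)` satisfy the braid relations
    (∀ i j : ℕ, i < n - 1 → j < n - 1 → (i + 1 < j ∨ j + 1 < i) →
      Bop α B i (n - 2) ≫ Bop α B j (n - 2)
        = Bop α B j (n - 2) ≫ Bop α B i (n - 2)) ∧
    (∀ i : ℕ, i + 1 < n - 1 →
      Bop α B i (n - 2) ≫ Bop α B (i + 1) (n - 2) ≫ Bop α B i (n - 2)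
        = Bop α B (i + 1) (n - 2) ≫ Bop α B i (n - 2) ≫ Bop α B (i + 1) (n - 2)) := by
  have hybe' : (α ⊗ₘ B) ≫ ((α_ M M M).inv ≫ (B ⊗ₘ α) ≫ (α_ M M M).hom) ≫ (α ⊗ₘ B)
      = ((α_ M M M).inv ≫ (B ⊗ₘ α) ≫ (α_ M M M).hom) ≫ (α ⊗ₘ B) ≫
          ((α_ M M M).inv ≫ (B ⊗ₘ α) ≫ (α_ M M M).hom) := by
    have := congrArg (fun f => (α_ M M M).inv ≫ f ≫ (α_ M M M).hom) hybe
    simpa only [Category.assoc, Iso.inv_hom_id, Iso.inv_hom_id_assoc,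
      Category.comp_id, Category.id_comp] using this
  constructor
  · intro i j hi hj hij
    rcases hij with h | h
    · exact Bop_far_comm α B hcomm i j (n - 2) (by omega) (by omega)
    · exact (Bop_far_comm α B hcomm j i (n - 2) (by omega) (by omega)).symm
  · intro i hi
    exact Bop_braid α B hybe' i (n - 2) (by omega)
end

section
/- Let B be a solution of the Hom-Yang-Baxter equation for (V,α) with both α and B invertible, and let B₁ = B⊗α⊗α, B₂ = α⊗B⊗α, B₃ = α⊗α⊗B on V^{⊗4}. Set B' = B₂∘B₃∘B₁∘B₂ : (V⊗V)⊗(V⊗V) → (V⊗V)⊗(V⊗V) and α₂ = (α⊗α)⁴ : V⊗V → V⊗V. Then B' commutes with α₂⊗α₂, both α₂ and B' are invertible, and B' is a solution of the Hom-Yang-Baxter equation for (V⊗V, α₂): (α₂⊗B')∘(B'⊗α₂)∘(α₂⊗B') = (B'⊗α₂)∘(α₂⊗B')∘(B'⊗α₂). -/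
open CategoryTheory MonoidalCategory

set_option maxHeartbeats 2000000

section Helpers

variable {C : Type*} [Category C]

private lemma word_lemma {X : C} (c1 c2 c3 c4 c5 : X ⟶ X)
    (b12 : c1 ≫ c2 ≫ c1 = c2 ≫ c1 ≫ c2)
    (b23 : c2 ≫ c3 ≫ c2 = c3 ≫ c2 ≫ c3)
    (b34 : c3 ≫ c4 ≫ c3 = c4 ≫ c3 ≫ c4)
    (b45 : c4 ≫ c5 ≫ c4 = c5 ≫ c4 ≫ c5)
    (m13 : c1 ≫ c3 = c3 ≫ c1) (m14 : c1 ≫ c4 = c4 ≫ c1)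
    (m15 : c1 ≫ c5 = c5 ≫ c1) (m24 : c2 ≫ c4 = c4 ≫ c2)
    (m25 : c2 ≫ c5 = c5 ≫ c2) (m35 : c3 ≫ c5 = c5 ≫ c3) :
    (c4 ≫ c3 ≫ c5 ≫ c4) ≫ (c2 ≫ c1 ≫ c3 ≫ c2) ≫ (c4 ≫ c3 ≫ c5 ≫ c4)
      = (c2 ≫ c1 ≫ c3 ≫ c2) ≫ (c4 ≫ c3 ≫ c5 ≫ c4) ≫ (c2 ≫ c1 ≫ c3 ≫ c2) := by
  simp only [Category.assoc]
  have b12' := reassoc_of% b12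
  have b23' := reassoc_of% b23
  have b34' := reassoc_of% b34
  have b45' := reassoc_of% b45
  have m13' := reassoc_of% m13
  have m14' := reassoc_of% m14
  have m15' := reassoc_of% m15
  have m24' := reassoc_of% m24
  have m25' := reassoc_of% m25
  have m35' := reassoc_of% m35
  calc c4 ≫ c3 ≫ c5 ≫ c4 ≫ c2 ≫ c1 ≫ c3 ≫ c2 ≫ c4 ≫ c3 ≫ c5 ≫ c4
  _ = c4 ≫ c3 ≫ c5 ≫ c2 ≫ c4 ≫ c1 ≫ c3 ≫ c2 ≫ c4 ≫ c3 ≫ c5 ≫ c4 := whisker_eq _ (whisker_eq _ (whisker_eq _ ((m24' _).symm)))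
  _ = c4 ≫ c3 ≫ c2 ≫ c5 ≫ c4 ≫ c1 ≫ c3 ≫ c2 ≫ c4 ≫ c3 ≫ c5 ≫ c4 := whisker_eq _ (whisker_eq _ ((m25' _).symm))
  _ = c4 ≫ c3 ≫ c2 ≫ c5 ≫ c1 ≫ c4 ≫ c3 ≫ c2 ≫ c4 ≫ c3 ≫ c5 ≫ c4 := whisker_eq _ (whisker_eq _ (whisker_eq _ (whisker_eq _ ((m14' _).symm))))
  _ = c4 ≫ c3 ≫ c2 ≫ c1 ≫ c5 ≫ c4 ≫ c3 ≫ c2 ≫ c4 ≫ c3 ≫ c5 ≫ c4 := whisker_eq _ (whisker_eq _ (whisker_eq _ ((m15' _).symm)))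
  _ = c4 ≫ c3 ≫ c2 ≫ c1 ≫ c5 ≫ c4 ≫ c3 ≫ c4 ≫ c2 ≫ c3 ≫ c5 ≫ c4 := whisker_eq _ (whisker_eq _ (whisker_eq _ (whisker_eq _ (whisker_eq _ (whisker_eq _ (whisker_eq _ (m24' _)))))))
  _ = c4 ≫ c3 ≫ c2 ≫ c1 ≫ c5 ≫ c3 ≫ c4 ≫ c3 ≫ c2 ≫ c3 ≫ c5 ≫ c4 := whisker_eq _ (whisker_eq _ (whisker_eq _ (whisker_eq _ (whisker_eq _ ((b34' _).symm)))))
  _ = c4 ≫ c3 ≫ c2 ≫ c1 ≫ c3 ≫ c5 ≫ c4 ≫ c3 ≫ c2 ≫ c3 ≫ c5 ≫ c4 := whisker_eq _ (whisker_eq _ (whisker_eq _ (whisker_eq _ ((m35' _).symm))))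
  _ = c4 ≫ c3 ≫ c2 ≫ c3 ≫ c1 ≫ c5 ≫ c4 ≫ c3 ≫ c2 ≫ c3 ≫ c5 ≫ c4 := whisker_eq _ (whisker_eq _ (whisker_eq _ (m13' _)))
  _ = c4 ≫ c3 ≫ c2 ≫ c3 ≫ c1 ≫ c5 ≫ c4 ≫ c2 ≫ c3 ≫ c2 ≫ c5 ≫ c4 := whisker_eq _ (whisker_eq _ (whisker_eq _ (whisker_eq _ (whisker_eq _ (whisker_eq _ (whisker_eq _ ((b23' _).symm)))))))
  _ = c4 ≫ c3 ≫ c2 ≫ c3 ≫ c1 ≫ c5 ≫ c2 ≫ c4 ≫ c3 ≫ c2 ≫ c5 ≫ c4 := whisker_eq _ (whisker_eq _ (whisker_eq _ (whisker_eq _ (whisker_eq _ (whisker_eq _ ((m24' _).symm))))))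
  _ = c4 ≫ c3 ≫ c2 ≫ c3 ≫ c1 ≫ c2 ≫ c5 ≫ c4 ≫ c3 ≫ c2 ≫ c5 ≫ c4 := whisker_eq _ (whisker_eq _ (whisker_eq _ (whisker_eq _ (whisker_eq _ ((m25' _).symm)))))
  _ = c4 ≫ c3 ≫ c2 ≫ c3 ≫ c1 ≫ c2 ≫ c5 ≫ c4 ≫ c3 ≫ c5 ≫ c2 ≫ c4 := whisker_eq _ (whisker_eq _ (whisker_eq _ (whisker_eq _ (whisker_eq _ (whisker_eq _ (whisker_eq _ (whisker_eq _ (whisker_eq _ (m25' _)))))))))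
  _ = c4 ≫ c3 ≫ c2 ≫ c3 ≫ c1 ≫ c2 ≫ c5 ≫ c4 ≫ c5 ≫ c3 ≫ c2 ≫ c4 := whisker_eq _ (whisker_eq _ (whisker_eq _ (whisker_eq _ (whisker_eq _ (whisker_eq _ (whisker_eq _ (whisker_eq _ (m35' _))))))))
  _ = c4 ≫ c3 ≫ c2 ≫ c3 ≫ c1 ≫ c2 ≫ c5 ≫ c4 ≫ c5 ≫ c3 ≫ c4 ≫ c2 := whisker_eq _ (whisker_eq _ (whisker_eq _ (whisker_eq _ (whisker_eq _ (whisker_eq _ (whisker_eq _ (whisker_eq _ (whisker_eq _ (whisker_eq _ (m24))))))))))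
  _ = c4 ≫ c3 ≫ c2 ≫ c3 ≫ c1 ≫ c2 ≫ c4 ≫ c5 ≫ c4 ≫ c3 ≫ c4 ≫ c2 := whisker_eq _ (whisker_eq _ (whisker_eq _ (whisker_eq _ (whisker_eq _ (whisker_eq _ ((b45' _).symm))))))
  _ = c4 ≫ c3 ≫ c2 ≫ c3 ≫ c1 ≫ c2 ≫ c4 ≫ c5 ≫ c3 ≫ c4 ≫ c3 ≫ c2 := whisker_eq _ (whisker_eq _ (whisker_eq _ (whisker_eq _ (whisker_eq _ (whisker_eq _ (whisker_eq _ (whisker_eq _ ((b34' _).symm))))))))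
  _ = c4 ≫ c2 ≫ c3 ≫ c2 ≫ c1 ≫ c2 ≫ c4 ≫ c5 ≫ c3 ≫ c4 ≫ c3 ≫ c2 := whisker_eq _ ((b23' _).symm)
  _ = c4 ≫ c2 ≫ c3 ≫ c1 ≫ c2 ≫ c1 ≫ c4 ≫ c5 ≫ c3 ≫ c4 ≫ c3 ≫ c2 := whisker_eq _ (whisker_eq _ (whisker_eq _ ((b12' _).symm)))
  _ = c4 ≫ c2 ≫ c3 ≫ c1 ≫ c2 ≫ c4 ≫ c1 ≫ c5 ≫ c3 ≫ c4 ≫ c3 ≫ c2 := whisker_eq _ (whisker_eq _ (whisker_eq _ (whisker_eq _ (whisker_eq _ (m14' _)))))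
  _ = c4 ≫ c2 ≫ c3 ≫ c1 ≫ c4 ≫ c2 ≫ c1 ≫ c5 ≫ c3 ≫ c4 ≫ c3 ≫ c2 := whisker_eq _ (whisker_eq _ (whisker_eq _ (whisker_eq _ (m24' _))))
  _ = c4 ≫ c2 ≫ c1 ≫ c3 ≫ c4 ≫ c2 ≫ c1 ≫ c5 ≫ c3 ≫ c4 ≫ c3 ≫ c2 := whisker_eq _ (whisker_eq _ ((m13' _).symm))
  _ = c2 ≫ c4 ≫ c1 ≫ c3 ≫ c4 ≫ c2 ≫ c1 ≫ c5 ≫ c3 ≫ c4 ≫ c3 ≫ c2 := (m24' _).symm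
  _ = c2 ≫ c1 ≫ c4 ≫ c3 ≫ c4 ≫ c2 ≫ c1 ≫ c5 ≫ c3 ≫ c4 ≫ c3 ≫ c2 := whisker_eq _ ((m14' _).symm)
  _ = c2 ≫ c1 ≫ c3 ≫ c4 ≫ c3 ≫ c2 ≫ c1 ≫ c5 ≫ c3 ≫ c4 ≫ c3 ≫ c2 := whisker_eq _ (whisker_eq _ ((b34' _).symm))
  _ = c2 ≫ c1 ≫ c3 ≫ c4 ≫ c3 ≫ c2 ≫ c1 ≫ c3 ≫ c5 ≫ c4 ≫ c3 ≫ c2 := whisker_eq _ (whisker_eq _ (whisker_eq _ (whisker_eq _ (whisker_eq _ (whisker_eq _ (whisker_eq _ ((m35' _).symm)))))))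
  _ = c2 ≫ c1 ≫ c3 ≫ c4 ≫ c3 ≫ c2 ≫ c3 ≫ c1 ≫ c5 ≫ c4 ≫ c3 ≫ c2 := whisker_eq _ (whisker_eq _ (whisker_eq _ (whisker_eq _ (whisker_eq _ (whisker_eq _ (m13' _))))))
  _ = c2 ≫ c1 ≫ c3 ≫ c4 ≫ c2 ≫ c3 ≫ c2 ≫ c1 ≫ c5 ≫ c4 ≫ c3 ≫ c2 := whisker_eq _ (whisker_eq _ (whisker_eq _ (whisker_eq _ ((b23' _).symm))))
  _ = c2 ≫ c1 ≫ c3 ≫ c4 ≫ c2 ≫ c3 ≫ c2 ≫ c5 ≫ c1 ≫ c4 ≫ c3 ≫ c2 := whisker_eq _ (whisker_eq _ (whisker_eq _ (whisker_eq _ (whisker_eq _ (whisker_eq _ (whisker_eq _ (m15' _)))))))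
  _ = c2 ≫ c1 ≫ c3 ≫ c4 ≫ c2 ≫ c3 ≫ c2 ≫ c5 ≫ c4 ≫ c1 ≫ c3 ≫ c2 := whisker_eq _ (whisker_eq _ (whisker_eq _ (whisker_eq _ (whisker_eq _ (whisker_eq _ (whisker_eq _ (whisker_eq _ (m14' _))))))))
  _ = c2 ≫ c1 ≫ c3 ≫ c4 ≫ c2 ≫ c3 ≫ c5 ≫ c2 ≫ c4 ≫ c1 ≫ c3 ≫ c2 := whisker_eq _ (whisker_eq _ (whisker_eq _ (whisker_eq _ (whisker_eq _ (whisker_eq _ (m25' _))))))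
  _ = c2 ≫ c1 ≫ c3 ≫ c4 ≫ c2 ≫ c3 ≫ c5 ≫ c4 ≫ c2 ≫ c1 ≫ c3 ≫ c2 := whisker_eq _ (whisker_eq _ (whisker_eq _ (whisker_eq _ (whisker_eq _ (whisker_eq _ (whisker_eq _ (m24' _)))))))
  _ = c2 ≫ c1 ≫ c3 ≫ c2 ≫ c4 ≫ c3 ≫ c5 ≫ c4 ≫ c2 ≫ c1 ≫ c3 ≫ c2 := whisker_eq _ (whisker_eq _ (whisker_eq _ ((m24' _).symm)))

private lemma conj_comm_st {X Y : C} (s : X ⟶ Y) (t : Y ⟶ X) (h : t ≫ s = 𝟙 Y)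
    {x y : Y ⟶ Y} (hxy : x ≫ y = y ≫ x) :
    (s ≫ x ≫ t) ≫ (s ≫ y ≫ t) = (s ≫ y ≫ t) ≫ (s ≫ x ≫ t) := by
  have h' := reassoc_of% h
  simp only [Category.assoc, h']
  rw [reassoc_of% hxy]

private lemma conj_braid_st {X Y : C} (s : X ⟶ Y) (t : Y ⟶ X) (h : t ≫ s = 𝟙 Y)
    {x y : Y ⟶ Y} (hxy : x ≫ y ≫ x = y ≫ x ≫ y) :
    (s ≫ x ≫ t) ≫ (s ≫ y ≫ t) ≫ (s ≫ x ≫ t)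
      = (s ≫ y ≫ t) ≫ (s ≫ x ≫ t) ≫ (s ≫ y ≫ t) := by
  have h' := reassoc_of% h
  simp only [Category.assoc, h']
  rw [reassoc_of% hxy]

variable [MonoidalCategory C]

private lemma tcomm {X Y : C} {x y : X ⟶ X} {a b : Y ⟶ Y}
    (h1 : x ≫ y = y ≫ x) (h2 : a ≫ b = b ≫ a) :
    (x ⊗ₘ a) ≫ (y ⊗ₘ b) = (y ⊗ₘ b) ≫ (x ⊗ₘ a) := by
  rw [tensorHom_comp_tensorHom, tensorHom_comp_tensorHom, h1, h2]

private lemma tbraid {X Y : C} {x y : X ⟶ X} {a : Y ⟶ Y}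
    (h : x ≫ y ≫ x = y ≫ x ≫ y) :
    (x ⊗ₘ a) ≫ (y ⊗ₘ a) ≫ (x ⊗ₘ a) = (y ⊗ₘ a) ≫ (x ⊗ₘ a) ≫ (y ⊗ₘ a) := by
  rw [tensorHom_comp_tensorHom, tensorHom_comp_tensorHom, tensorHom_comp_tensorHom, tensorHom_comp_tensorHom, h]

private lemma tbraid_left {X Y : C} {a : X ⟶ X} {x y : Y ⟶ Y}
    (h : x ≫ y ≫ x = y ≫ x ≫ y) :
    (a ⊗ₘ x) ≫ (a ⊗ₘ y) ≫ (a ⊗ₘ x) = (a ⊗ₘ y) ≫ (a ⊗ₘ x) ≫ (a ⊗ₘ y) := by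
  rw [tensorHom_comp_tensorHom, tensorHom_comp_tensorHom, tensorHom_comp_tensorHom, tensorHom_comp_tensorHom, h]

end Helpers

noncomputable abbrev tau2 {k : Type*} [Field k] (M : ModuleCat k) :
    (M ⊗ M) ⊗ (M ⊗ M) ⟶ M ⊗ ((M ⊗ M) ⊗ M) :=
  (α_ M M (M ⊗ M)).hom ≫ (𝟙 M ⊗ₘ (α_ M M M).inv)

noncomputable abbrev tau2i {k : Type*} [Field k] (M : ModuleCat k) :
    M ⊗ ((M ⊗ M) ⊗ M) ⟶ (M ⊗ M) ⊗ (M ⊗ M) :=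
  (𝟙 M ⊗ₘ (α_ M M M).hom) ≫ (α_ M M (M ⊗ M)).inv

noncomputable abbrev sig {k : Type*} [Field k] (M : ModuleCat k) :
    ((M ⊗ M) ⊗ (M ⊗ M)) ⊗ (M ⊗ M) ⟶ ((M ⊗ M) ⊗ M) ⊗ ((M ⊗ M) ⊗ M) :=
  ((α_ (M ⊗ M) M M).inv ⊗ₘ 𝟙 (M ⊗ M)) ≫ (α_ ((M ⊗ M) ⊗ M) M (M ⊗ M)).hom ≫
    (𝟙 ((M ⊗ M) ⊗ M) ⊗ₘ (α_ M M M).inv)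

noncomputable abbrev sigi {k : Type*} [Field k] (M : ModuleCat k) :
    ((M ⊗ M) ⊗ M) ⊗ ((M ⊗ M) ⊗ M) ⟶ ((M ⊗ M) ⊗ (M ⊗ M)) ⊗ (M ⊗ M) :=
  (𝟙 ((M ⊗ M) ⊗ M) ⊗ₘ (α_ M M M).hom) ≫ (α_ ((M ⊗ M) ⊗ M) M (M ⊗ M)).inv ≫
    ((α_ (M ⊗ M) M M).hom ⊗ₘ 𝟙 (M ⊗ M))

section Transports

variable {k : Type*} [Field k] (M : ModuleCat k) (α : M ⟶ M) (B : M ⊗ M ⟶ M ⊗ M)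

set_option maxHeartbeats 2000000 in
private lemma LTB2 :
    (α_ (M ⊗ M) M M).inv ≫ ((α_ M M M).hom ⊗ₘ 𝟙 M) ≫ ((α ⊗ₘ B) ⊗ₘ α) ≫
        ((α_ M M M).inv ⊗ₘ 𝟙 M) ≫ (α_ (M ⊗ M) M M).hom
      = (α_ (M ⊗ M) M M).inv ≫
        (((α_ M M M).hom ≫ (α ⊗ₘ B) ≫ (α_ M M M).inv) ⊗ₘ α) ≫ (α_ (M ⊗ M) M M).hom := by
  monoidal

set_option maxHeartbeats 2000000 in
private lemma LTB2' :
    (α_ (M ⊗ M) M M).inv ≫ ((α_ M M M).hom ⊗ₘ 𝟙 M) ≫ ((α ⊗ₘ B) ⊗ₘ α) ≫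
        ((α_ M M M).inv ⊗ₘ 𝟙 M) ≫ (α_ (M ⊗ M) M M).hom
      = tau2 M ≫ (α ⊗ₘ (B ⊗ₘ α)) ≫ tau2i M := by
  monoidal

set_option maxHeartbeats 2000000 in
private lemma LTB3' :
    ((α ⊗ₘ α) ⊗ₘ B : (M⊗M)⊗(M⊗M) ⟶ (M⊗M)⊗(M⊗M))
      = tau2 M ≫ (α ⊗ₘ ((α_ M M M).hom ≫ (α ⊗ₘ B) ≫ (α_ M M M).inv)) ≫ tau2i M := by
  monoidal

set_option maxHeartbeats 2000000 in
private lemma LTμμ : ((α ⊗ₘ α) ⊗ₘ (α ⊗ₘ α) : (M⊗M)⊗(M⊗M) ⟶ (M⊗M)⊗(M⊗M))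
    = tau2 M ≫ (α ⊗ₘ ((α ⊗ₘ α) ⊗ₘ α)) ≫ tau2i M := by
  monoidal

set_option maxHeartbeats 2000000 in
private lemma Lτiτ : tau2i M ≫ tau2 M = 𝟙 (M ⊗ ((M ⊗ M) ⊗ M)) := by
  monoidal_coherence

set_option maxHeartbeats 4000000 in
private lemma LTg1 : ((B ⊗ₘ (α ⊗ₘ α)) ⊗ₘ (α ⊗ₘ α) : ((M⊗M)⊗(M⊗M))⊗(M⊗M) ⟶ ((M⊗M)⊗(M⊗M))⊗(M⊗M))
    = sig M ≫ ((B ⊗ₘ α) ⊗ₘ ((α ⊗ₘ α) ⊗ₘ α)) ≫ sigi M := by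
  monoidal

set_option maxHeartbeats 4000000 in
private lemma LTg2 :
    (((α_ (M ⊗ M) M M).inv ≫ ((α_ M M M).hom ⊗ₘ 𝟙 M) ≫ ((α ⊗ₘ B) ⊗ₘ α) ≫
        ((α_ M M M).inv ⊗ₘ 𝟙 M) ≫ (α_ (M ⊗ M) M M).hom) ⊗ₘ (α ⊗ₘ α))
      = sig M ≫ (((α_ M M M).hom ≫ (α ⊗ₘ B) ≫ (α_ M M M).inv) ⊗ₘ ((α ⊗ₘ α) ⊗ₘ α)) ≫ sigi M := by
  monoidal

set_option maxHeartbeats 4000000 in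
private lemma LTh2 :
    (α_ (M⊗M) (M⊗M) (M⊗M)).hom ≫ ((α ⊗ₘ α) ⊗ₘ
      ((α_ (M ⊗ M) M M).inv ≫ ((α_ M M M).hom ⊗ₘ 𝟙 M) ≫ ((α ⊗ₘ B) ⊗ₘ α) ≫
        ((α_ M M M).inv ⊗ₘ 𝟙 M) ≫ (α_ (M ⊗ M) M M).hom)) ≫ (α_ (M⊗M) (M⊗M) (M⊗M)).inv
      = sig M ≫ (((α ⊗ₘ α) ⊗ₘ α) ⊗ₘ (B ⊗ₘ α)) ≫ sigi M := by
  monoidal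

set_option maxHeartbeats 4000000 in
private lemma LTh3 :
    (α_ (M⊗M) (M⊗M) (M⊗M)).hom ≫ ((α ⊗ₘ α) ⊗ₘ ((α ⊗ₘ α) ⊗ₘ B)) ≫ (α_ (M⊗M) (M⊗M) (M⊗M)).inv
      = sig M ≫ (((α ⊗ₘ α) ⊗ₘ α) ⊗ₘ ((α_ M M M).hom ≫ (α ⊗ₘ B) ≫ (α_ M M M).inv)) ≫ sigi M := by
  monoidal

set_option maxHeartbeats 4000000 in
private lemma Lσiσ : sigi M ≫ sig M = 𝟙 (((M ⊗ M) ⊗ M) ⊗ ((M ⊗ M) ⊗ M)) := by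
  monoidal_coherence

end Transports


set_option maxHeartbeats 8000000 in
theorem stmt16 {k : Type*} [Field k] (M : ModuleCat k)
    (α : M ⟶ M) (B : M ⊗ M ⟶ M ⊗ M)
    -- B commutes with α ⊗ₘ α
    (hcomm : B ≫ (α ⊗ₘ α) = (α ⊗ₘ α) ≫ B)
    -- the Hom-Yang-Baxter equation for (M, α)
    (hybe : ((α_ M M M).hom ≫ (α ⊗ₘ B) ≫ (α_ M M M).inv) ≫ (B ⊗ₘ α) ≫
        ((α_ M M M).hom ≫ (α ⊗ₘ B) ≫ (α_ M M M).inv)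
      = (B ⊗ₘ α) ≫ ((α_ M M M).hom ≫ (α ⊗ₘ B) ≫ (α_ M M M).inv) ≫ (B ⊗ₘ α))
    (hαinv : IsIso α) (hBinv : IsIso B) :
    -- B₁ = B ⊗ₘ α ⊗ₘ α, B₃ = α ⊗ₘ α ⊗ₘ B, and B₂ = α ⊗ₘ B ⊗ₘ α (via reassociation)
    ∀ B1 B2 B3 : (M ⊗ M) ⊗ (M ⊗ M) ⟶ (M ⊗ M) ⊗ (M ⊗ M),
      B1 = B ⊗ₘ (α ⊗ₘ α) →
      B2 = (α_ (M ⊗ M) M M).inv ≫ ((α_ M M M).hom ⊗ₘ 𝟙 M) ≫ ((α ⊗ₘ B) ⊗ₘ α) ≫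
            ((α_ M M M).inv ⊗ₘ 𝟙 M) ≫ (α_ (M ⊗ M) M M).hom →
      B3 = (α ⊗ₘ α) ⊗ₘ B →
      ∀ B' : (M ⊗ M) ⊗ (M ⊗ M) ⟶ (M ⊗ M) ⊗ (M ⊗ M),
        -- B' = B₂ ∘ B₃ ∘ B₁ ∘ B₂  (rightmost applied first)
        B' = B2 ≫ B1 ≫ B3 ≫ B2 →
        ∀ α₂ : M ⊗ M ⟶ M ⊗ M,
          -- α₂ = (α ⊗ₘ α)⁴
          α₂ = (α ⊗ₘ α) ≫ (α ⊗ₘ α) ≫ (α ⊗ₘ α) ≫ (α ⊗ₘ α) →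
          -- B' commutes with α₂ ⊗ₘ α₂
          (B' ≫ (α₂ ⊗ₘ α₂) = (α₂ ⊗ₘ α₂) ≫ B') ∧
          -- both α₂ and B' are invertible
          IsIso α₂ ∧ IsIso B' ∧
          -- B' is a solution of the HYBE for (M ⊗ M, α₂)
          (((α_ (M ⊗ M) (M ⊗ M) (M ⊗ M)).hom ≫ (α₂ ⊗ₘ B') ≫
              (α_ (M ⊗ M) (M ⊗ M) (M ⊗ M)).inv) ≫ (B' ⊗ₘ α₂) ≫
            ((α_ (M ⊗ M) (M ⊗ M) (M ⊗ M)).hom ≫ (α₂ ⊗ₘ B') ≫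
              (α_ (M ⊗ M) (M ⊗ M) (M ⊗ M)).inv)
            = (B' ⊗ₘ α₂) ≫
              ((α_ (M ⊗ M) (M ⊗ M) (M ⊗ M)).hom ≫ (α₂ ⊗ₘ B') ≫
                (α_ (M ⊗ M) (M ⊗ M) (M ⊗ M)).inv) ≫ (B' ⊗ₘ α₂)) := by
  intro B1 B2 B3 hB1 hB2 hB3 B' hB' α₂ hα₂
  haveI := hαinv; haveI := hBinv
  -- the two 3-strand operators
  have hd : ((α_ M M M).hom ≫ (α ⊗ₘ B) ≫ (α_ M M M).inv) ≫ (B ⊗ₘ α) ≫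
      ((α_ M M M).hom ≫ (α ⊗ₘ B) ≫ (α_ M M M).inv)
      = (B ⊗ₘ α) ≫ ((α_ M M M).hom ≫ (α ⊗ₘ B) ≫ (α_ M M M).inv) ≫ (B ⊗ₘ α) := hybe
  -- commutation of the 3-strand operators with ν = α ⊗ₘ α ⊗ₘ α
  have dν1 : (B ⊗ₘ α) ≫ ((α ⊗ₘ α) ⊗ₘ α) = ((α ⊗ₘ α) ⊗ₘ α) ≫ (B ⊗ₘ α) :=
    tcomm hcomm rfl
  have dν2 : ((α_ M M M).hom ≫ (α ⊗ₘ B) ≫ (α_ M M M).inv) ≫ ((α ⊗ₘ α) ⊗ₘ α)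
      = ((α ⊗ₘ α) ⊗ₘ α) ≫ ((α_ M M M).hom ≫ (α ⊗ₘ B) ≫ (α_ M M M).inv) := by
    simp only [Category.assoc]
    rw [← associator_inv_naturality, reassoc_of% (tcomm rfl hcomm),
      ← associator_naturality_assoc]
  -- transports of B1 B2 B3 to 4-strand conjugated forms
  have TB1 : B1 = (α_ (M ⊗ M) M M).inv ≫ ((B ⊗ₘ α) ⊗ₘ α) ≫ (α_ (M ⊗ M) M M).hom := by
    rw [hB1, associator_naturality, Iso.inv_hom_id_assoc]
  have TB2 : B2 = (α_ (M ⊗ M) M M).inv ≫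
      (((α_ M M M).hom ≫ (α ⊗ₘ B) ≫ (α_ M M M).inv) ⊗ₘ α) ≫ (α_ (M ⊗ M) M M).hom := by
    rw [hB2]; exact LTB2 M α B
  have TB2' : B2 = tau2 M ≫ (α ⊗ₘ (B ⊗ₘ α)) ≫ tau2i M := by
    rw [hB2]; exact LTB2' M α B
  have TB3' : B3 = tau2 M ≫ (α ⊗ₘ ((α_ M M M).hom ≫ (α ⊗ₘ B) ≫ (α_ M M M).inv)) ≫ tau2i M := by
    rw [hB3]; exact LTB3' M α B
  have Tμμ : ((α ⊗ₘ α) ⊗ₘ (α ⊗ₘ α) : (M⊗M)⊗(M⊗M) ⟶ (M⊗M)⊗(M⊗M))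
      = tau2 M ≫ (α ⊗ₘ ((α ⊗ₘ α) ⊗ₘ α)) ≫ tau2i M := LTμμ M α
  have τiτ : tau2i M ≫ tau2 M = 𝟙 (M ⊗ ((M ⊗ M) ⊗ M)) := Lτiτ M
  -- 4-strand relations
  have R12 : B1 ≫ B2 ≫ B1 = B2 ≫ B1 ≫ B2 := by
    rw [TB1, TB2]
    exact conj_braid_st _ _ (α_ (M ⊗ M) M M).hom_inv_id (tbraid hd.symm)
  have R23 : B2 ≫ B3 ≫ B2 = B3 ≫ B2 ≫ B3 := by
    rw [TB2', TB3']
    exact conj_braid_st _ _ τiτ (tbraid_left hd.symm)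
  have R13 : B1 ≫ B3 = B3 ≫ B1 := by
    rw [hB1, hB3]; exact tcomm hcomm hcomm.symm
  have Rc1 : B1 ≫ ((α ⊗ₘ α) ⊗ₘ (α ⊗ₘ α)) = ((α ⊗ₘ α) ⊗ₘ (α ⊗ₘ α)) ≫ B1 := by
    rw [hB1]; exact tcomm hcomm rfl
  have Rc3 : B3 ≫ ((α ⊗ₘ α) ⊗ₘ (α ⊗ₘ α)) = ((α ⊗ₘ α) ⊗ₘ (α ⊗ₘ α)) ≫ B3 := by
    rw [hB3]; exact tcomm rfl hcomm
  have Rc2 : B2 ≫ ((α ⊗ₘ α) ⊗ₘ (α ⊗ₘ α)) = ((α ⊗ₘ α) ⊗ₘ (α ⊗ₘ α)) ≫ B2 := by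
    rw [TB2', Tμμ]
    exact conj_comm_st _ _ τiτ (tcomm rfl dν1)
  -- transports to 6 strands via sig
  have Tg1 : (B1 ⊗ₘ (α ⊗ₘ α) : ((M⊗M)⊗(M⊗M))⊗(M⊗M) ⟶ ((M⊗M)⊗(M⊗M))⊗(M⊗M))
      = sig M ≫ ((B ⊗ₘ α) ⊗ₘ ((α ⊗ₘ α) ⊗ₘ α)) ≫ sigi M := by
    rw [hB1]; exact LTg1 M α B
  have Tg2 : (B2 ⊗ₘ (α ⊗ₘ α) : ((M⊗M)⊗(M⊗M))⊗(M⊗M) ⟶ ((M⊗M)⊗(M⊗M))⊗(M⊗M))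
      = sig M ≫ (((α_ M M M).hom ≫ (α ⊗ₘ B) ≫ (α_ M M M).inv) ⊗ₘ ((α ⊗ₘ α) ⊗ₘ α)) ≫ sigi M := by
    rw [hB2]; exact LTg2 M α B
  have Th2 : (α_ (M⊗M) (M⊗M) (M⊗M)).hom ≫ ((α ⊗ₘ α) ⊗ₘ B2) ≫ (α_ (M⊗M) (M⊗M) (M⊗M)).inv
      = sig M ≫ (((α ⊗ₘ α) ⊗ₘ α) ⊗ₘ (B ⊗ₘ α)) ≫ sigi M := by
    rw [hB2]; exact LTh2 M α B
  have Th3 : (α_ (M⊗M) (M⊗M) (M⊗M)).hom ≫ ((α ⊗ₘ α) ⊗ₘ B3) ≫ (α_ (M⊗M) (M⊗M) (M⊗M)).inv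
      = sig M ≫ (((α ⊗ₘ α) ⊗ₘ α) ⊗ₘ ((α_ M M M).hom ≫ (α ⊗ₘ B) ≫ (α_ M M M).inv)) ≫ sigi M := by
    rw [hB3]; exact LTh3 M α B
  have σiσ : sigi M ≫ sig M = 𝟙 (((M ⊗ M) ⊗ M) ⊗ ((M ⊗ M) ⊗ M)) := Lσiσ M
  have heq : (α_ (M⊗M) (M⊗M) (M⊗M)).hom ≫ ((α ⊗ₘ α) ⊗ₘ B1) ≫ (α_ (M⊗M) (M⊗M) (M⊗M)).inv
      = B3 ⊗ₘ (α ⊗ₘ α) := by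
    rw [hB1, hB3, associator_inv_naturality, Iso.hom_inv_id_assoc]
  -- the six-strand generators' relations
  have b12 : (B1 ⊗ₘ (α⊗ₘα)) ≫ (B2 ⊗ₘ (α⊗ₘα)) ≫ (B1 ⊗ₘ (α⊗ₘα))
      = (B2 ⊗ₘ (α⊗ₘα)) ≫ (B1 ⊗ₘ (α⊗ₘα)) ≫ (B2 ⊗ₘ (α⊗ₘα)) := tbraid R12
  have b23 : (B2 ⊗ₘ (α⊗ₘα)) ≫ (B3 ⊗ₘ (α⊗ₘα)) ≫ (B2 ⊗ₘ (α⊗ₘα))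
      = (B3 ⊗ₘ (α⊗ₘα)) ≫ (B2 ⊗ₘ (α⊗ₘα)) ≫ (B3 ⊗ₘ (α⊗ₘα)) := tbraid R23
  have m13 : (B1 ⊗ₘ (α⊗ₘα)) ≫ (B3 ⊗ₘ (α⊗ₘα)) = (B3 ⊗ₘ (α⊗ₘα)) ≫ (B1 ⊗ₘ (α⊗ₘα)) :=
    tcomm R13 rfl
  have b34 : (B3 ⊗ₘ (α⊗ₘα)) ≫
        ((α_ (M⊗M) (M⊗M) (M⊗M)).hom ≫ ((α ⊗ₘ α) ⊗ₘ B2) ≫ (α_ (M⊗M) (M⊗M) (M⊗M)).inv) ≫ (B3 ⊗ₘ (α⊗ₘα))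
      = ((α_ (M⊗M) (M⊗M) (M⊗M)).hom ≫ ((α ⊗ₘ α) ⊗ₘ B2) ≫ (α_ (M⊗M) (M⊗M) (M⊗M)).inv) ≫
          (B3 ⊗ₘ (α⊗ₘα)) ≫ ((α_ (M⊗M) (M⊗M) (M⊗M)).hom ≫ ((α ⊗ₘ α) ⊗ₘ B2) ≫ (α_ (M⊗M) (M⊗M) (M⊗M)).inv) := by
    rw [← heq]
    exact conj_braid_st _ _ (α_ (M⊗M) (M⊗M) (M⊗M)).inv_hom_id (tbraid_left R12)
  have b45 : ((α_ (M⊗M) (M⊗M) (M⊗M)).hom ≫ ((α ⊗ₘ α) ⊗ₘ B2) ≫ (α_ (M⊗M) (M⊗M) (M⊗M)).inv) ≫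
        ((α_ (M⊗M) (M⊗M) (M⊗M)).hom ≫ ((α ⊗ₘ α) ⊗ₘ B3) ≫ (α_ (M⊗M) (M⊗M) (M⊗M)).inv) ≫
        ((α_ (M⊗M) (M⊗M) (M⊗M)).hom ≫ ((α ⊗ₘ α) ⊗ₘ B2) ≫ (α_ (M⊗M) (M⊗M) (M⊗M)).inv)
      = ((α_ (M⊗M) (M⊗M) (M⊗M)).hom ≫ ((α ⊗ₘ α) ⊗ₘ B3) ≫ (α_ (M⊗M) (M⊗M) (M⊗M)).inv) ≫
        ((α_ (M⊗M) (M⊗M) (M⊗M)).hom ≫ ((α ⊗ₘ α) ⊗ₘ B2) ≫ (α_ (M⊗M) (M⊗M) (M⊗M)).inv) ≫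
        ((α_ (M⊗M) (M⊗M) (M⊗M)).hom ≫ ((α ⊗ₘ α) ⊗ₘ B3) ≫ (α_ (M⊗M) (M⊗M) (M⊗M)).inv) :=
    conj_braid_st _ _ (α_ (M⊗M) (M⊗M) (M⊗M)).inv_hom_id (tbraid_left R23)
  have m35 : (B3 ⊗ₘ (α⊗ₘα)) ≫
        ((α_ (M⊗M) (M⊗M) (M⊗M)).hom ≫ ((α ⊗ₘ α) ⊗ₘ B3) ≫ (α_ (M⊗M) (M⊗M) (M⊗M)).inv)
      = ((α_ (M⊗M) (M⊗M) (M⊗M)).hom ≫ ((α ⊗ₘ α) ⊗ₘ B3) ≫ (α_ (M⊗M) (M⊗M) (M⊗M)).inv) ≫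
          (B3 ⊗ₘ (α⊗ₘα)) := by
    rw [← heq]
    exact conj_comm_st _ _ (α_ (M⊗M) (M⊗M) (M⊗M)).inv_hom_id (tcomm rfl R13)
  have m14 : (B1 ⊗ₘ (α⊗ₘα)) ≫
        ((α_ (M⊗M) (M⊗M) (M⊗M)).hom ≫ ((α ⊗ₘ α) ⊗ₘ B2) ≫ (α_ (M⊗M) (M⊗M) (M⊗M)).inv)
      = ((α_ (M⊗M) (M⊗M) (M⊗M)).hom ≫ ((α ⊗ₘ α) ⊗ₘ B2) ≫ (α_ (M⊗M) (M⊗M) (M⊗M)).inv) ≫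
          (B1 ⊗ₘ (α⊗ₘα)) := by
    rw [Tg1, Th2]
    exact conj_comm_st _ _ σiσ (tcomm dν1 dν1.symm)
  have m15 : (B1 ⊗ₘ (α⊗ₘα)) ≫
        ((α_ (M⊗M) (M⊗M) (M⊗M)).hom ≫ ((α ⊗ₘ α) ⊗ₘ B3) ≫ (α_ (M⊗M) (M⊗M) (M⊗M)).inv)
      = ((α_ (M⊗M) (M⊗M) (M⊗M)).hom ≫ ((α ⊗ₘ α) ⊗ₘ B3) ≫ (α_ (M⊗M) (M⊗M) (M⊗M)).inv) ≫
          (B1 ⊗ₘ (α⊗ₘα)) := by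
    rw [Tg1, Th3]
    exact conj_comm_st _ _ σiσ (tcomm dν1 dν2.symm)
  have m24 : (B2 ⊗ₘ (α⊗ₘα)) ≫
        ((α_ (M⊗M) (M⊗M) (M⊗M)).hom ≫ ((α ⊗ₘ α) ⊗ₘ B2) ≫ (α_ (M⊗M) (M⊗M) (M⊗M)).inv)
      = ((α_ (M⊗M) (M⊗M) (M⊗M)).hom ≫ ((α ⊗ₘ α) ⊗ₘ B2) ≫ (α_ (M⊗M) (M⊗M) (M⊗M)).inv) ≫
          (B2 ⊗ₘ (α⊗ₘα)) := by
    rw [Tg2, Th2]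
    exact conj_comm_st _ _ σiσ (tcomm dν2 dν1.symm)
  have m25 : (B2 ⊗ₘ (α⊗ₘα)) ≫
        ((α_ (M⊗M) (M⊗M) (M⊗M)).hom ≫ ((α ⊗ₘ α) ⊗ₘ B3) ≫ (α_ (M⊗M) (M⊗M) (M⊗M)).inv)
      = ((α_ (M⊗M) (M⊗M) (M⊗M)).hom ≫ ((α ⊗ₘ α) ⊗ₘ B3) ≫ (α_ (M⊗M) (M⊗M) (M⊗M)).inv) ≫
          (B2 ⊗ₘ (α⊗ₘα)) := by
    rw [Tg2, Th3]
    exact conj_comm_st _ _ σiσ (tcomm dν2 dν2.symm)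
  refine ⟨?_, ?_, ?_, ?_⟩
  · -- B' commutes with α₂ ⊗ₘ α₂
    have Rc1' := reassoc_of% Rc1
    have Rc2' := reassoc_of% Rc2
    have Rc3' := reassoc_of% Rc3
    rw [hB', hα₂]
    simp only [← tensorHom_comp_tensorHom, Category.assoc, Rc1', Rc2', Rc3', Rc1, Rc2, Rc3]
  · rw [hα₂]; infer_instance
  · rw [hB', hB1, hB2, hB3]; infer_instance
  · -- the HYBE for B'
    have hW1 : B' ⊗ₘ α₂ = (B2 ⊗ₘ (α⊗ₘα)) ≫ (B1 ⊗ₘ (α⊗ₘα)) ≫ (B3 ⊗ₘ (α⊗ₘα)) ≫ (B2 ⊗ₘ (α⊗ₘα)) := by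
      rw [hB', hα₂]; simp only [← tensorHom_comp_tensorHom]
    have hW2 : (α_ (M⊗M) (M⊗M) (M⊗M)).hom ≫ (α₂ ⊗ₘ B') ≫ (α_ (M⊗M) (M⊗M) (M⊗M)).inv
        = ((α_ (M⊗M) (M⊗M) (M⊗M)).hom ≫ ((α ⊗ₘ α) ⊗ₘ B2) ≫ (α_ (M⊗M) (M⊗M) (M⊗M)).inv) ≫
          ((α_ (M⊗M) (M⊗M) (M⊗M)).hom ≫ ((α ⊗ₘ α) ⊗ₘ B1) ≫ (α_ (M⊗M) (M⊗M) (M⊗M)).inv) ≫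
          ((α_ (M⊗M) (M⊗M) (M⊗M)).hom ≫ ((α ⊗ₘ α) ⊗ₘ B3) ≫ (α_ (M⊗M) (M⊗M) (M⊗M)).inv) ≫
          ((α_ (M⊗M) (M⊗M) (M⊗M)).hom ≫ ((α ⊗ₘ α) ⊗ₘ B2) ≫ (α_ (M⊗M) (M⊗M) (M⊗M)).inv) := by
      rw [hB', hα₂]
      simp only [← tensorHom_comp_tensorHom, Category.assoc, Iso.inv_hom_id_assoc]
    rw [hW1, hW2, heq]
    exact word_lemma _ _ _ _ _ b12 b23 b34 b45 m13 m14 m15 m24 m25 m35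
end

section
/- Let L = (L,[−,−],α) be a Hom-Lie algebra with α invertible, set L' = C ⊕ L with α(a,x) = (a,α(x)), and define B_α((a,x)⊗(b,y)) = (b,α(y))⊗(a,α(x)) + (1,0)⊗(0,[x,y]). Then B_α is invertible with inverse B_α⁻¹((a,x)⊗(b,y)) = (b,α⁻¹(y))⊗(a,α⁻¹(x)) + (0,α⁻²([x,y]))⊗(1,0). -/
open TensorProduct

/-- The operator `B_α` on `(ℂ × L) ⊗ (ℂ × L)` given by
`B_α ((a,x) ⊗ (b,y)) = (b, α y) ⊗ (a, α x) + (1,0) ⊗ (0, [x,y])`. -/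
noncomputable def homLieB {L : Type*} [AddCommGroup L] [Module ℂ L]
    (br : L →ₗ[ℂ] L →ₗ[ℂ] L) (α : L →ₗ[ℂ] L) :
    ((ℂ × L) ⊗[ℂ] (ℂ × L)) →ₗ[ℂ] ((ℂ × L) ⊗[ℂ] (ℂ × L)) :=
  (TensorProduct.comm ℂ (ℂ × L) (ℂ × L)).toLinearMap ∘ₗ
      TensorProduct.map ((LinearMap.id : ℂ →ₗ[ℂ] ℂ).prodMap α)
        ((LinearMap.id : ℂ →ₗ[ℂ] ℂ).prodMap α) +
    (TensorProduct.mk ℂ (ℂ × L) (ℂ × L) (1, 0)) ∘ₗ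
      (LinearMap.inr ℂ ℂ L) ∘ₗ (TensorProduct.lift br) ∘ₗ
      TensorProduct.map (LinearMap.snd ℂ ℂ L) (LinearMap.snd ℂ ℂ L)

/-- The candidate inverse:
`(a,x) ⊗ (b,y) ↦ (b, α⁻¹ y) ⊗ (a, α⁻¹ x) + (0, α⁻²[x,y]) ⊗ (1,0)`. -/
noncomputable def homLieBinv {L : Type*} [AddCommGroup L] [Module ℂ L]
    (br : L →ₗ[ℂ] L →ₗ[ℂ] L) (αinv : L →ₗ[ℂ] L) :
    ((ℂ × L) ⊗[ℂ] (ℂ × L)) →ₗ[ℂ] ((ℂ × L) ⊗[ℂ] (ℂ × L)) :=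
  (TensorProduct.comm ℂ (ℂ × L) (ℂ × L)).toLinearMap ∘ₗ
      TensorProduct.map ((LinearMap.id : ℂ →ₗ[ℂ] ℂ).prodMap αinv)
        ((LinearMap.id : ℂ →ₗ[ℂ] ℂ).prodMap αinv) +
    ((TensorProduct.mk ℂ (ℂ × L) (ℂ × L)).flip (1, 0)) ∘ₗ
      (LinearMap.inr ℂ ℂ L) ∘ₗ αinv ∘ₗ αinv ∘ₗ (TensorProduct.lift br) ∘ₗ
      TensorProduct.map (LinearMap.snd ℂ ℂ L) (LinearMap.snd ℂ ℂ L)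

theorem stmt18 {L : Type*} [AddCommGroup L] [Module ℂ L]
    (br : L →ₗ[ℂ] L →ₗ[ℂ] L) (α αinv : L →ₗ[ℂ] L)
    (hskew : ∀ x y : L, br x y = - br y x)
    (hmult : ∀ x y : L, α (br x y) = br (α x) (α y))
    (hjac : ∀ x y z : L,
      br (br x y) (α z) + br (br z x) (α y) + br (br y z) (α x) = 0)
    (hinv1 : αinv ∘ₗ α = LinearMap.id) (hinv2 : α ∘ₗ αinv = LinearMap.id) :
    homLieB br α ∘ₗ homLieBinv br αinv = LinearMap.id ∧
    homLieBinv br αinv ∘ₗ homLieB br α = LinearMap.id := by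
  have h1 : ∀ x, αinv (α x) = x := fun x => congrFun (congrArg DFunLike.coe hinv1) x
  have h2 : ∀ x, α (αinv x) = x := fun x => congrFun (congrArg DFunLike.coe hinv2) x
  have hbr : ∀ x y, br (αinv x) (αinv y) = αinv (br x y) := by
    intro x y
    have := hmult (αinv x) (αinv y)
    rw [h2, h2] at this
    rw [← this, h1]
  constructor <;> apply TensorProduct.ext' <;> intro p q <;>
    obtain ⟨a, x⟩ := p <;> obtain ⟨b, y⟩ := q <;>
    simp [homLieB, homLieBinv, tmul_add, add_tmul, h1, h2, ← hmult, hskew x y,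
      map_zero, map_neg, hbr] <;>
    rw [add_assoc] <;>
    simp [← tmul_add, ← add_tmul, Prod.mk_zero_zero]
end
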